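/- arXiv:1311.4387 — 7 statements merged into one kernel-verified Lean document; each statement's English description precedes it below -/
import Mathlib

section
/- For every integer p ≥ 1 and every sequence x : ℤ → ℝ, the forward difference of the refined sequence satisfies Δ(S_p x) = (1/2)·S_{p−1}(Δx), i.e. (S_p x)_{i+1} − (S_p x)_i = (1/2)·(S_{p−1}(Δx))_i for all i ∈ ℤ. -/
/-- The Lane–Riesenfeld (B-spline) subdivision operator `S p` on real sequences:
`(S 0 x) (2i) = (S 0 x) (2i+1) = x i` and `(S (p+1) x) i = ((S p x) i + (S p x) (i+1)) / 2`. -/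
noncomputable def S : ℕ → (ℤ → ℝ) → ℤ → ℝ
  | 0, x, i => x (Int.fdiv i 2)
  | p + 1, x, i => (S p x i + S p x (i + 1)) / 2

/-- Forward difference operator. -/
noncomputable def Δ (x : ℤ → ℝ) : ℤ → ℝ := fun i => x (i + 1) - x i

lemma fdiv_add_two (i : ℤ) : Int.fdiv (i + 2) 2 = Int.fdiv i 2 + 1 := by
  rw [Int.fdiv_eq_ediv_of_nonneg _ (by norm_num), Int.fdiv_eq_ediv_of_nonneg _ (by norm_num)]; omega

/-- For every `p ≥ 1` and every sequence `x : ℤ → ℝ`,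
`Δ(S_p x) = (1/2) · S_{p−1}(Δ x)`. -/
theorem forward_difference_of_LaneRiesenfeld (p : ℕ) (hp : 1 ≤ p) (x : ℤ → ℝ) (i : ℤ) :
    S p x (i + 1) - S p x i = (1 / 2 : ℝ) * S (p - 1) (Δ x) i := by
  induction p generalizing i with
  | zero => omega
  | succ p ih =>
    rcases Nat.eq_zero_or_pos p with h | h
    · subst h
      simp only [S, Δ]
      rw [show i + 1 + 1 = i + 2 by ring, fdiv_add_two]
      change _ = _ * (x (Int.fdiv i 2 + 1) - x (Int.fdiv i 2))
      ring
    · have h1 := ih h i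
      have h2 := ih h (i + 1)
      simp only [S, Nat.add_sub_cancel]
      rw [show p = (p - 1) + 1 from (Nat.succ_pred_eq_of_pos h).symm]
      simp only [S]
      rw [show i + 1 + 1 = i + 1 + 1 by ring]
      have e1 : S ((p-1)+1) x (i+1) - S ((p-1)+1) x i = (1/2 : ℝ) * S (p-1) (Δ x) i := by
        rw [← Nat.succ_pred_eq_of_pos h] at h1
        simpa using h1
      have e2 : S ((p-1)+1) x (i+1+1) - S ((p-1)+1) x (i+1) = (1/2 : ℝ) * S (p-1) (Δ x) (i+1) := by
        rw [← Nat.succ_pred_eq_of_pos h] at h2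
        simpa using h2
      simp only [S] at e1 e2 ⊢
      linarith
end

section
/- For every integer p ≥ 2, every real shift α, and every K ∈ ℤ, applying S_p to the sampled quadratic x_i = (i + α)² yields (S_p x)_K = t² + (p+1)/16, where t = K/2 + α + (p−1)/4. -/
lemma aux_LR (α : ℝ) : ∀ p : ℕ, 2 ≤ p → ∀ K : ℤ,
    S p (fun i => ((i : ℝ) + α) ^ 2) K
      = ((K : ℝ) / 2 + α + ((p : ℝ) - 1) / 4) ^ 2 + ((p : ℝ) + 1) / 16 := by
  intro p hp
  induction p, hp using Nat.le_induction with
  | base =>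
    intro K
    show S 2 _ K = _
    simp only [S]
    rw [Int.fdiv_eq_ediv_of_nonneg _ (by norm_num), Int.fdiv_eq_ediv_of_nonneg _ (by norm_num),
        Int.fdiv_eq_ediv_of_nonneg _ (by norm_num)]
    rcases Int.even_or_odd K with ⟨m, hm⟩ | ⟨m, hm⟩
    · have h1 : K / 2 = m := by omega
      have h2 : (K + 1) / 2 = m := by omega
      have h3 : (K + 1 + 1) / 2 = m + 1 := by omega
      rw [h1, h2, h3]
      have : (K : ℝ) = m + m := by exact_mod_cast hm
      rw [this]
      push_cast
      ring
    · have h1 : K / 2 = m := by omega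
      have h2 : (K + 1) / 2 = m + 1 := by omega
      have h3 : (K + 1 + 1) / 2 = m + 1 := by omega
      rw [h1, h2, h3]
      have : (K : ℝ) = 2 * m + 1 := by exact_mod_cast hm
      rw [this]
      push_cast
      ring
  | succ p hp ih =>
    intro K
    show (S p _ K + S p _ (K + 1)) / 2 = _
    rw [ih K, ih (K + 1)]
    push_cast
    ring

/-- For `p ≥ 2`, every shift `α ∈ ℝ` and every `K ∈ ℤ`, applying `S_p` to the sampled
quadratic `x_i = (i + α)²` yields `(S_p x)_K = t² + (p+1)/16` at `t = K/2 + α + (p−1)/4`. -/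
theorem LaneRiesenfeld_on_quadratic (p : ℕ) (hp : 2 ≤ p) (α : ℝ) (K : ℤ) (t : ℝ)
    (ht : t = (K : ℝ) / 2 + α + ((p : ℝ) - 1) / 4) :
    S p (fun i => ((i : ℝ) + α) ^ 2) K = t ^ 2 + ((p : ℝ) + 1) / 16 := by
  rw [ht]; exact aux_LR α p hp K
end

section
/- For every integer p ≥ 3, every real shift α, and every K ∈ ℤ, applying S_p to the sampled cubic x_i = (i + α)³ yields (S_p x)_K = t³ + (3(p+1)/16)·t, where t = K/2 + α + (p−1)/4. -/
lemma fdiv_val (a b : ℤ) (h : a = 2*b ∨ a = 2*b+1) : Int.fdiv a 2 = b := by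
  rw [Int.fdiv_eq_ediv_of_nonneg _ (by norm_num)]; omega

/-- For `p ≥ 3`, every shift `α ∈ ℝ` and every `K ∈ ℤ`, applying `S_p` to the sampled
cubic `x_i = (i + α)³` yields `(S_p x)_K = t³ + (3(p+1)/16)·t` at `t = K/2 + α + (p−1)/4`. -/
theorem LaneRiesenfeld_on_cubic (p : ℕ) (hp : 3 ≤ p) (α : ℝ) (K : ℤ) (t : ℝ)
    (ht : t = (K : ℝ) / 2 + α + ((p : ℝ) - 1) / 4) :
    S p (fun i => ((i : ℝ) + α) ^ 3) K = t ^ 3 + 3 * ((p : ℝ) + 1) / 16 * t := by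
  subst ht
  induction p, hp using Nat.le_induction generalizing K with
  | base =>
    rcases Int.even_or_odd K with ⟨m, hm⟩ | ⟨m, hm⟩ <;> subst hm <;>
      simp only [S,
        fdiv_val (m+m) m (by omega), fdiv_val (m+m+1) m (by omega),
        fdiv_val (m+m+1+1) (m+1) (by omega), fdiv_val (m+m+1+1+1) (m+1) (by omega),
        fdiv_val (2*m+1) m (by omega), fdiv_val (2*m+1+1) (m+1) (by omega),
        fdiv_val (2*m+1+1+1) (m+1) (by omega), fdiv_val (2*m+1+1+1+1) (m+2) (by omega)] <;>
      push_cast <;> ring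
  | succ p hp ih =>
    show (S p _ K + S p _ (K+1))/2 = _
    rw [ih K, ih (K+1)]
    push_cast
    ring
end

section
/- Let p, n be integers with 0 ≤ n ≤ p. Then there exists a polynomial r with deg r ≤ n − 8 (r = 0 if n < 8) satisfying r(−t) = (−1)^n r(t), such that for every K ∈ ℤ, applying S_p to the sampled monomial x_i = i^n yields (S_p x)_K = t^n + A₂·t^{n−2} + A₄·t^{n−4} + A₆·t^{n−6} + r(t) evaluated at t = K/2 + (p−1)/4, where A₂ = C(n,2)·(p+1)/4², A₄ = C(n,4)·(3p+1)(p+1)/4⁴, A₆ = C(n,6)·(15p²+1)(p+1)/4⁶ (here C(n,k) is the binomial coefficient, and a term A_{2k}·t^{n−2k} is omitted when 2k > n; its coefficient C(n,2k) vanishes in that case). -/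
open Finset Polynomial

lemma pascal_sum (G : ℕ → ℝ) (p : ℕ) :
    ∑ j ∈ Finset.range (p+2), ((p+1).choose j : ℝ) * G j
    = ∑ j ∈ Finset.range (p+1), (p.choose j : ℝ) * G j
      + ∑ j ∈ Finset.range (p+1), (p.choose j : ℝ) * G (j+1) := by
  rw [Finset.sum_range_succ' (fun j => ((p+1).choose j : ℝ) * G j) (p+1)]
  have h1 : ∀ j ∈ Finset.range (p+1), ((p+1).choose (j+1) : ℝ) * G (j+1)
      = (p.choose j : ℝ) * G (j+1) + (p.choose (j+1) : ℝ) * G (j+1) := by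
    intro j _
    rw [Nat.choose_succ_succ]
    push_cast
    ring
  rw [Finset.sum_congr rfl h1, Finset.sum_add_distrib]
  have h2 : ∑ j ∈ Finset.range (p+1), (p.choose (j+1) : ℝ) * G (j+1)
      + ((p+1).choose 0 : ℝ) * G 0 = ∑ j ∈ Finset.range (p+1), (p.choose j : ℝ) * G j := by
    rw [Finset.sum_range_succ (fun j => (p.choose (j+1) : ℝ) * G (j+1)) p,
      Finset.sum_range_succ' (fun j => (p.choose j : ℝ) * G j) p]
    simp [Nat.choose_succ_self]
  rw [add_assoc, h2]
  ring

lemma S_eq (p : ℕ) (x : ℤ → ℝ) (K : ℤ) :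
    S p x K = (∑ j ∈ Finset.range (p+1), (p.choose j : ℝ) * x ((K + j).fdiv 2)) / 2^p := by
  induction p generalizing K with
  | zero => simp [S]
  | succ p ih =>
      have : S (p+1) x K = (S p x K + S p x (K+1)) / 2 := rfl
      rw [this, ih K, ih (K+1),
        pascal_sum (fun j => x ((K + (j:ℤ)).fdiv 2)) p]
      have h : ∀ j ∈ Finset.range (p+1),
          (p.choose j : ℝ) * x ((K + 1 + (j:ℤ)).fdiv 2)
          = (p.choose j : ℝ) * x ((K + ((j:ℕ)+1 : ℕ)).fdiv 2) := by
        intro j _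
        congr 2
        push_cast
        ring
      rw [Finset.sum_congr rfl h]
      ring

noncomputable def T (k m : ℕ) : ℝ :=
  ∑ j ∈ Finset.range (m+1), (m.choose j : ℝ) * (2*(j:ℝ) - m)^k

lemma T_step (k m : ℕ) : T k (m+1)
    = ∑ j ∈ Finset.range (m+1), (m.choose j : ℝ)
        * ((2*(j:ℝ) - m - 1)^k + (2*(j:ℝ) - m + 1)^k) := by
  have := pascal_sum (fun j => (2*(j:ℝ) - (m+1))^k) m
  unfold T
  push_cast at this ⊢
  rw [this, ← Finset.sum_add_distrib]
  apply Finset.sum_congr rfl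
  intro j _
  push_cast
  ring_nf

lemma T_odd (k m : ℕ) (hk : Odd k) : T k m = 0 := by
  have h1 := Finset.sum_range_reflect (fun j => (m.choose j : ℝ) * (2*(j:ℝ) - m)^k) (m+1)
  have h2 : ∑ j ∈ Finset.range (m+1),
      (m.choose (m+1-1-j) : ℝ) * (2*((m+1-1-j : ℕ):ℝ) - m)^k = -T k m := by
    rw [show -T k m = ∑ j ∈ Finset.range (m+1), -((m.choose j : ℝ) * (2*(j:ℝ) - m)^k) by
      rw [Finset.sum_neg_distrib]; rfl]
    apply Finset.sum_congr rfl
    intro j hj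
    rw [Finset.mem_range] at hj
    have hj' : j ≤ m := by omega
    have e1 : m + 1 - 1 - j = m - j := by omega
    rw [e1, Nat.choose_symm hj']
    have : (2*((m - j : ℕ):ℝ) - m) = -(2*(j:ℝ) - m) := by
      push_cast [Nat.cast_sub hj']
      ring
    rw [this, hk.neg_pow]
    ring
  have h3 : T k m = -T k m := by
    rw [← h2]
    rw [show T k m = ∑ j ∈ Finset.range (m+1), (m.choose j : ℝ) * (2*(j:ℝ) - m)^k from rfl]
    rw [← h1]
  linarith

lemma T_zero (m : ℕ) : T 0 m = 2^m := by
  unfold T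
  simp only [pow_zero, mul_one]
  rw [← Nat.cast_sum]
  rw [Nat.sum_range_choose]
  push_cast
  ring

lemma T_two (m : ℕ) : T 2 m = m * 2^m := by
  induction m with
  | zero => simp [T]
  | succ m ih =>
      rw [T_step]
      have h : ∀ j ∈ Finset.range (m+1), (m.choose j : ℝ)
          * ((2*(j:ℝ) - m - 1)^2 + (2*(j:ℝ) - m + 1)^2)
          = 2 * ((m.choose j : ℝ) * (2*(j:ℝ) - m)^2) + 2 * ((m.choose j : ℝ) * (2*(j:ℝ) - m)^0) := by
        intro j _; ring
      rw [Finset.sum_congr rfl h, Finset.sum_add_distrib, ← Finset.mul_sum, ← Finset.mul_sum]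
      rw [show (∑ j ∈ Finset.range (m+1), (m.choose j : ℝ) * (2*(j:ℝ) - m)^2) = T 2 m from rfl]
      rw [show (∑ j ∈ Finset.range (m+1), (m.choose j : ℝ) * (2*(j:ℝ) - m)^0) = T 0 m from rfl]
      rw [ih, T_zero]
      push_cast
      ring

lemma T_four (m : ℕ) : T 4 m = (3*(m:ℝ)^2 - 2*m) * 2^m := by
  induction m with
  | zero => simp [T]
  | succ m ih =>
      rw [T_step]
      have h : ∀ j ∈ Finset.range (m+1), (m.choose j : ℝ)
          * ((2*(j:ℝ) - m - 1)^4 + (2*(j:ℝ) - m + 1)^4)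
          = 2 * ((m.choose j : ℝ) * (2*(j:ℝ) - m)^4) + (12 * ((m.choose j : ℝ) * (2*(j:ℝ) - m)^2) + 2 * ((m.choose j : ℝ) * (2*(j:ℝ) - m)^0)) := by
        intro j _; ring
      rw [Finset.sum_congr rfl h, Finset.sum_add_distrib, Finset.sum_add_distrib,
        ← Finset.mul_sum, ← Finset.mul_sum, ← Finset.mul_sum]
      rw [show (∑ j ∈ Finset.range (m+1), (m.choose j : ℝ) * (2*(j:ℝ) - m)^4) = T 4 m from rfl]
      rw [show (∑ j ∈ Finset.range (m+1), (m.choose j : ℝ) * (2*(j:ℝ) - m)^2) = T 2 m from rfl]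
      rw [show (∑ j ∈ Finset.range (m+1), (m.choose j : ℝ) * (2*(j:ℝ) - m)^0) = T 0 m from rfl]
      rw [ih, T_two, T_zero]
      push_cast
      ring

lemma T_six (m : ℕ) : T 6 m = (15*(m:ℝ)^3 - 30*(m:ℝ)^2 + 16*m) * 2^m := by
  induction m with
  | zero => simp [T]
  | succ m ih =>
      rw [T_step]
      have h : ∀ j ∈ Finset.range (m+1), (m.choose j : ℝ)
          * ((2*(j:ℝ) - m - 1)^6 + (2*(j:ℝ) - m + 1)^6)
          = 2 * ((m.choose j : ℝ) * (2*(j:ℝ) - m)^6) + (30 * ((m.choose j : ℝ) * (2*(j:ℝ) - m)^4) + (30 * ((m.choose j : ℝ) * (2*(j:ℝ) - m)^2) + 2 * ((m.choose j : ℝ) * (2*(j:ℝ) - m)^0))) := by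
        intro j _; ring
      rw [Finset.sum_congr rfl h, Finset.sum_add_distrib, Finset.sum_add_distrib, Finset.sum_add_distrib,
        ← Finset.mul_sum, ← Finset.mul_sum, ← Finset.mul_sum, ← Finset.mul_sum]
      rw [show (∑ j ∈ Finset.range (m+1), (m.choose j : ℝ) * (2*(j:ℝ) - m)^6) = T 6 m from rfl]
      rw [show (∑ j ∈ Finset.range (m+1), (m.choose j : ℝ) * (2*(j:ℝ) - m)^4) = T 4 m from rfl]
      rw [show (∑ j ∈ Finset.range (m+1), (m.choose j : ℝ) * (2*(j:ℝ) - m)^2) = T 2 m from rfl]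
      rw [show (∑ j ∈ Finset.range (m+1), (m.choose j : ℝ) * (2*(j:ℝ) - m)^0) = T 0 m from rfl]
      rw [ih, T_four, T_two, T_zero]
      push_cast
      ring

lemma alt_sum (p : ℕ) : ∀ (q : Polynomial ℝ), q.degree < p → ∀ a : ℝ,
    ∑ j ∈ Finset.range (p+1), (-1:ℝ)^j * (p.choose j : ℝ) * q.eval (a + j) = 0 := by
  induction p with
  | zero =>
      intro q hq a
      have hb : q.degree = ⊥ := Nat.WithBot.lt_zero_iff.mp (by simpa using hq)
      have : q = 0 := Polynomial.degree_eq_bot.mp hb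
      simp [this]
  | succ p ih =>
      intro q hq a
      by_cases hq0 : q = 0
      · simp [hq0]
      have hnd1 : (X + C (1:ℝ)).natDegree = 1 := Polynomial.natDegree_X_add_C 1
      have hlc1 : (X + C (1:ℝ)).leadingCoeff = 1 := (Polynomial.monic_X_add_C 1)
      set Δ : Polynomial ℝ := q.comp (X + C 1) - q with hΔ
      have h1 : (q.comp (X + C (1:ℝ))).natDegree = q.natDegree := by
        rw [Polynomial.natDegree_comp, hnd1, mul_one]
      have hlc : (q.comp (X + C (1:ℝ))).leadingCoeff = q.leadingCoeff := by
        rw [Polynomial.leadingCoeff_comp (by rw [hnd1]; norm_num), hlc1, one_pow, mul_one]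
      have h2 : q.comp (X + C (1:ℝ)) ≠ 0 := by
        intro h
        apply hq0
        apply Polynomial.leadingCoeff_eq_zero.mp
        rw [← hlc, h, Polynomial.leadingCoeff_zero]
      have hc : (q.comp (X + C (1:ℝ))).degree = q.degree := by
        rw [Polynomial.degree_eq_natDegree h2, Polynomial.degree_eq_natDegree hq0, h1]
      have hdeg : Δ.degree < p := by
        have h3 : Δ.degree < q.degree := by
          have := Polynomial.degree_sub_lt hc h2 hlc
          rw [hc] at this
          exact this
        have h4 : q.degree ≤ (p : WithBot ℕ) := by
          have h5 : q.natDegree < p + 1 :=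
            (Polynomial.natDegree_lt_iff_degree_lt hq0).mpr hq
          rw [Polynomial.degree_eq_natDegree hq0]
          exact_mod_cast Nat.lt_succ_iff.mp h5
        exact lt_of_lt_of_le h3 h4
      have key := pascal_sum (fun j => (-1:ℝ)^j * q.eval (a + j)) p
      have key2 : ∑ j ∈ Finset.range (p+2), ((p+1).choose j : ℝ) * ((-1:ℝ)^j * q.eval (a + j))
          = - ∑ j ∈ Finset.range (p+1), (-1:ℝ)^j * (p.choose j : ℝ) * Δ.eval (a + j) := by
        rw [key, ← Finset.sum_neg_distrib, ← Finset.sum_add_distrib]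
        apply Finset.sum_congr rfl
        intro j _
        have hev : Δ.eval (a + j) = q.eval (a + j + 1) - q.eval (a + j) := by
          rw [hΔ]
          simp [Polynomial.eval_comp]
        rw [hev]
        push_cast
        ring
      rw [ih Δ hdeg a] at key2
      simp only [neg_zero] at key2
      rw [← key2]
      apply Finset.sum_congr rfl
      intro j _
      ring

/-- For `0 ≤ n ≤ p`, applying `S_p` to the sampled monomial `x_i = i^n` yields
`(S_p x)_K = tⁿ + A₂·t^{n−2} + A₄·t^{n−4} + A₆·t^{n−6} + r(t)` at `t = K/2 + (p−1)/4`,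
where `A₂ = C(n,2)(p+1)/4²`, `A₄ = C(n,4)(3p+1)(p+1)/4⁴`, `A₆ = C(n,6)(15p²+1)(p+1)/4⁶`,
and `r` is a polynomial with `deg r ≤ n − 8` (`r = 0` if `n < 8`) satisfying
`r(−t) = (−1)ⁿ r(t)`. (Terms with `2k > n` vanish since then `C(n,2k) = 0`.) -/
theorem LaneRiesenfeld_on_monomial (p n : ℕ) (hn : n ≤ p) :
    ∃ r : Polynomial ℝ,
      (r = 0 ∨ r.natDegree + 8 ≤ n) ∧
      (∀ t : ℝ, r.eval (-t) = (-1 : ℝ) ^ n * r.eval t) ∧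
      ∀ (K : ℤ) (t : ℝ), t = (K : ℝ) / 2 + ((p : ℝ) - 1) / 4 →
        S p (fun i => (i : ℝ) ^ n) K =
          t ^ n
          + (n.choose 2 : ℝ) * ((p : ℝ) + 1) / 4 ^ 2 * t ^ (n - 2)
          + (n.choose 4 : ℝ) * ((3 * (p : ℝ) + 1) * ((p : ℝ) + 1)) / 4 ^ 4 * t ^ (n - 4)
          + (n.choose 6 : ℝ) * ((15 * (p : ℝ) ^ 2 + 1) * ((p : ℝ) + 1)) / 4 ^ 6 * t ^ (n - 6)
          + r.eval t := by
  classical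
  set M : ℕ → ℝ := fun k => T k (p+1) / (4^k * 2^(p+1)) with hM
  set r : Polynomial ℝ :=
    ∑ i ∈ Finset.range n, Polynomial.C ((n.choose (8+i) : ℝ) * M (8+i)) * X^(n - (8+i)) with hr
  have hModd : ∀ k, Odd k → M k = 0 := by
    intro k hk
    simp [hM, T_odd k (p+1) hk]
  have hreval : ∀ u : ℝ, r.eval u
      = ∑ i ∈ Finset.range n, (n.choose (8+i) : ℝ) * M (8+i) * u^(n - (8+i)) := by
    intro u
    simp [hr, Polynomial.eval_finset_sum]
  refine ⟨r, ?_, ?_, ?_⟩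
  · -- degree
    by_cases h8 : 8 ≤ n
    · right
      have hd : r.natDegree ≤ n - 8 := by
        apply Polynomial.natDegree_sum_le_of_forall_le
        intro i _
        refine le_trans (Polynomial.natDegree_C_mul_le _ _) ?_
        rw [Polynomial.natDegree_X_pow]
        omega
      omega
    · left
      rw [hr]
      apply Finset.sum_eq_zero
      intro i hi
      rw [Finset.mem_range] at hi
      have : n.choose (8+i) = 0 := Nat.choose_eq_zero_of_lt (by omega)
      simp [this]
  · -- parity
    intro u
    rw [hreval, hreval, Finset.mul_sum]
    apply Finset.sum_congr rfl
    intro i _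
    rcases Nat.even_or_odd (8+i) with he | ho
    · by_cases hkn : 8 + i ≤ n
      · have h1 : (-u)^(n - (8+i)) = (-1:ℝ)^(n - (8+i)) * u^(n - (8+i)) := by
          rw [neg_pow]
        have h2 : (-1:ℝ)^(n - (8+i)) = (-1:ℝ)^n := by
          conv_rhs => rw [show n = (n - (8+i)) + (8+i) by omega]
          rw [pow_add, he.neg_one_pow, mul_one]
        rw [h1, h2]; ring
      · have : n.choose (8+i) = 0 := Nat.choose_eq_zero_of_lt (by omega)
        simp [this]
    · rw [hModd _ ho]; ring
  · -- main identity
    intro K t ht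
    have hfd : ∀ a : ℤ, ((a.fdiv 2 : ℤ) : ℝ)^n
        = (((a:ℝ)/2)^n + (((a:ℝ)-1)/2)^n)/2
          + (-1:ℝ)^a * ((((a:ℝ)/2)^n - (((a:ℝ)-1)/2)^n)/2) := by
      intro a
      rcases Int.even_or_odd a with ⟨b, hb⟩ | ⟨b, hb⟩
      · subst hb
        have h1 : (b + b).fdiv 2 = b := by
          rw [Int.fdiv_eq_ediv_of_nonneg _ (by norm_num)]
          omega
        have h2 : (-1:ℝ)^(b+b) = 1 := Even.neg_one_zpow ⟨b, rfl⟩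
        rw [h1, h2]
        push_cast
        ring
      · subst hb
        have h1 : (2*b + 1).fdiv 2 = b := by
          rw [Int.fdiv_eq_ediv_of_nonneg _ (by norm_num)]
          omega
        have h2 : (-1:ℝ)^(2*b+1) = -1 := Odd.neg_one_zpow ⟨b, rfl⟩
        rw [h1, h2]
        push_cast
        ring
    set q : Polynomial ℝ := Polynomial.C (1/2) *
        ((Polynomial.C (1/2) * X)^n - (Polynomial.C (1/2) * X - Polynomial.C (1/2))^n) with hq
    have hqeval : ∀ v : ℝ, q.eval v = ((v/2)^n - ((v-1)/2)^n)/2 := by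
      intro v
      simp only [hq, Polynomial.eval_mul, Polynomial.eval_sub, Polynomial.eval_pow,
        Polynomial.eval_C, Polynomial.eval_X]
      rw [show (1/2:ℝ)*v = v/2 by ring, show v/2 - 1/2 = (v-1)/2 by ring]
      ring
    have hqdeg : q.degree < p := by
      rcases Nat.eq_zero_or_pos n with hn0 | hnpos
      · rw [hq, hn0]
        simp only [pow_zero, sub_self, mul_zero]
        rw [Polynomial.degree_zero]
        exact WithBot.bot_lt_coe p
      · have hA : (Polynomial.C (1/2:ℝ) * X).degree = 1 := by
          rw [Polynomial.degree_C_mul (by norm_num)]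
          exact Polynomial.degree_X
        have hBeq : Polynomial.C (1/2:ℝ) * X - Polynomial.C (1/2)
            = Polynomial.C (1/2) * (X - Polynomial.C 1) := by rw [mul_sub, Polynomial.C_1, mul_one]
        have hB : (Polynomial.C (1/2:ℝ) * X - Polynomial.C (1/2)).degree = 1 := by
          rw [hBeq, Polynomial.degree_C_mul (by norm_num), Polynomial.degree_X_sub_C]
        have hlcA : (Polynomial.C (1/2:ℝ) * X).leadingCoeff = 1/2 := by
          rw [Polynomial.leadingCoeff_mul]
          simp
        have hlcB : (Polynomial.C (1/2:ℝ) * X - Polynomial.C (1/2)).leadingCoeff = 1/2 := by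
          rw [hBeq, Polynomial.leadingCoeff_mul, (Polynomial.monic_X_sub_C 1).leadingCoeff]
          simp
        have hd : ((Polynomial.C (1/2:ℝ) * X)^n).degree
            = ((Polynomial.C (1/2:ℝ)*X - Polynomial.C (1/2))^n).degree := by
          rw [Polynomial.degree_pow, Polynomial.degree_pow, hA, hB]
        have hlc : ((Polynomial.C (1/2:ℝ) * X)^n).leadingCoeff
            = ((Polynomial.C (1/2:ℝ)*X - Polynomial.C (1/2))^n).leadingCoeff := by
          rw [Polynomial.leadingCoeff_pow, Polynomial.leadingCoeff_pow, hlcA, hlcB]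
        have hne : (Polynomial.C (1/2:ℝ) * X)^n ≠ 0 := by
          apply pow_ne_zero
          intro h
          have := congrArg Polynomial.leadingCoeff h
          rw [hlcA, Polynomial.leadingCoeff_zero] at this
          norm_num at this
        have hsub := Polynomial.degree_sub_lt hd hne hlc
        rw [Polynomial.degree_pow, hA] at hsub
        have hsub2 : ((Polynomial.C (1/2:ℝ) * X)^n
            - (Polynomial.C (1/2:ℝ)*X - Polynomial.C (1/2))^n).degree < (n : WithBot ℕ) := by
          simpa using hsub
        have hqd : q.degree < (n : WithBot ℕ) := by
          rw [hq, Polynomial.degree_C_mul (by norm_num)]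
          exact hsub2
        exact lt_of_lt_of_le hqd (by exact_mod_cast Nat.cast_le.mpr hn)
    have hnum : ∑ j ∈ Finset.range (p+1), (p.choose j : ℝ) * (((K + (j:ℕ)).fdiv 2 : ℤ):ℝ)^n
        = (∑ j ∈ Finset.range (p+1), (p.choose j : ℝ)
            * ((((K:ℝ)+j)/2)^n + (((K:ℝ)+j-1)/2)^n)/2)
          + (-1:ℝ)^K * ∑ j ∈ Finset.range (p+1),
              (-1:ℝ)^j * (p.choose j : ℝ) * q.eval ((K:ℝ) + j) := by
      rw [Finset.mul_sum, ← Finset.sum_add_distrib]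
      apply Finset.sum_congr rfl
      intro j _
      rw [hfd (K + j), hqeval ((K:ℝ)+j)]
      have hz : (-1:ℝ)^(K + (j:ℕ) : ℤ) = (-1:ℝ)^K * (-1:ℝ)^j := by
        rw [zpow_add₀ (by norm_num : (-1:ℝ) ≠ 0), zpow_natCast]
      rw [hz]
      push_cast
      ring
    have halt := alt_sum p q hqdeg (K:ℝ)
    rw [halt, mul_zero, add_zero] at hnum
    have hS1 : S p (fun i => (i:ℝ)^n) K
        = (∑ j ∈ Finset.range (p+1), (p.choose j : ℝ)
            * ((((K:ℝ)+j)/2)^n + (((K:ℝ)+j-1)/2)^n)/2) / 2^p := by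
      rw [S_eq, ← hnum]
    have hpas := pascal_sum (fun j => (((K:ℝ) - 1 + j)/2)^n) p
    have hS2 : S p (fun i => (i:ℝ)^n) K
        = (∑ j ∈ Finset.range (p+2), ((p+1).choose j : ℝ) * (((K:ℝ)-1+j)/2)^n) / 2^(p+1) := by
      rw [hS1, hpas]
      rw [div_eq_div_iff (by positivity) (by positivity), Finset.sum_mul, add_mul,
        Finset.sum_mul, Finset.sum_mul, ← Finset.sum_add_distrib]
      apply Finset.sum_congr rfl
      intro j _
      have e1 : ((K:ℝ) - 1 + ((j:ℕ):ℝ)) / 2 = ((K:ℝ) + j - 1)/2 := by ring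
      have e2 : ((K:ℝ) - 1 + (((j:ℕ)+1:ℕ):ℝ)) / 2 = ((K:ℝ) + j)/2 := by push_cast; ring
      rw [e1, e2, pow_succ]
      ring
    have hexp : ∀ j ∈ Finset.range (p+2), ((p+1).choose j : ℝ) * (((K:ℝ)-1+j)/2)^n
        = ∑ k ∈ Finset.range (n+1), ((p+1).choose j : ℝ)
            * (((2*(j:ℝ)-((p:ℝ)+1))/4)^k * t^(n-k) * (n.choose k : ℝ)) := by
      intro j _
      rw [← Finset.mul_sum]
      congr 1
      rw [show ((K:ℝ)-1+j)/2 = (2*(j:ℝ)-((p:ℝ)+1))/4 + t by rw [ht]; ring]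
      exact add_pow _ _ n
    have hswap : ∑ j ∈ Finset.range (p+2), ((p+1).choose j : ℝ) * (((K:ℝ)-1+j)/2)^n
        = ∑ k ∈ Finset.range (n+1), ∑ j ∈ Finset.range (p+2),
            ((p+1).choose j : ℝ) * (((2*(j:ℝ)-((p:ℝ)+1))/4)^k * t^(n-k) * (n.choose k : ℝ)) := by
      rw [Finset.sum_congr rfl hexp]
      exact Finset.sum_comm
    have hinner : ∀ k, ∑ j ∈ Finset.range (p+2),
          ((p+1).choose j : ℝ) * (((2*(j:ℝ)-((p:ℝ)+1))/4)^k * t^(n-k) * (n.choose k : ℝ))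
        = (n.choose k : ℝ) * t^(n-k) * (T k (p+1) / 4^k) := by
      intro k
      have hT : T k (p+1) = ∑ j ∈ Finset.range (p+2), ((p+1).choose j : ℝ)
          * (2*(j:ℝ) - ((p:ℝ)+1))^k := by
        simp only [T]
        apply Finset.sum_congr rfl
        intro j _
        push_cast
        ring
      rw [hT]
      rw [Finset.sum_div, Finset.mul_sum]
      apply Finset.sum_congr rfl
      intro j _
      rw [div_pow]
      ring
    have hfin : S p (fun i => (i:ℝ)^n) K
        = ∑ k ∈ Finset.range (n+1), (n.choose k : ℝ) * t^(n-k) * M k := by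
      rw [hS2, hswap, Finset.sum_congr rfl (fun k _ => hinner k), Finset.sum_div]
      apply Finset.sum_congr rfl
      intro k _
      simp only [hM]
      field_simp
    have hext : S p (fun i => (i:ℝ)^n) K
        = ∑ k ∈ Finset.range (8+n), (n.choose k : ℝ) * t^(n-k) * M k := by
      rw [hfin]
      apply Finset.sum_subset
      · intro k hk
        rw [Finset.mem_range] at *
        omega
      · intro k _ hk
        rw [Finset.mem_range] at hk
        have : n.choose k = 0 := Nat.choose_eq_zero_of_lt (by omega)
        simp [this]
    have hsplit : ∑ k ∈ Finset.range (8+n), (n.choose k : ℝ) * t^(n-k) * M k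
        = (∑ k ∈ Finset.range 8, (n.choose k : ℝ) * t^(n-k) * M k)
          + ∑ i ∈ Finset.range n, (n.choose (8+i) : ℝ) * t^(n-(8+i)) * M (8+i) := by
      rw [← Finset.sum_range_add_sum_Ico _ (by omega : 8 ≤ 8+n)]
      congr 1
      rw [Finset.sum_Ico_eq_sum_range]
      simp
    have hrt : r.eval t = ∑ i ∈ Finset.range n, (n.choose (8+i) : ℝ) * t^(n-(8+i)) * M (8+i) := by
      rw [hreval]
      apply Finset.sum_congr rfl
      intro i _
      ring
    rw [hext, hsplit, ← hrt]
    congr 1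
    simp only [Finset.sum_range_succ, Finset.range_zero, Finset.sum_empty, zero_add]
    rw [show M 0 = 1 by simp only [hM]; rw [T_zero]; field_simp,
      hModd 1 ⟨0, by omega⟩, hModd 3 ⟨1, by omega⟩, hModd 5 ⟨2, by omega⟩, hModd 7 ⟨3, by omega⟩]
    rw [show M 2 = ((p:ℝ)+1)/4^2 by
        simp only [hM]; rw [T_two]; push_cast; rw [div_eq_div_iff (by positivity) (by positivity)]; ring]
    rw [show M 4 = (3*(p:ℝ)+1)*((p:ℝ)+1)/4^4 by
        simp only [hM]; rw [T_four]; push_cast; rw [div_eq_div_iff (by positivity) (by positivity)]; ring]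
    rw [show M 6 = (15*(p:ℝ)^2+1)*((p:ℝ)+1)/4^6 by
        simp only [hM]; rw [T_six]; push_cast; rw [div_eq_div_iff (by positivity) (by positivity)]; ring]
    simp only [Nat.choose_zero_right, Nat.cast_one, Nat.sub_zero]
    ring
end

section
/- Let p ≥ 1 be an integer. For every polynomial 𝔭 ∈ ℝ[t] with deg 𝔭 ≤ p there exists a polynomial 𝔮 ∈ ℝ[t] with deg 𝔮 < deg 𝔭 (𝔮 = 0 if deg 𝔭 = 0) such that for all i ∈ ℤ, applying S_p to the sequence (𝔭(k))_{k∈ℤ} yields (S_p(𝔭|_ℤ))_i = 𝔭(i/2) + 𝔮(i/2). In particular, the order of polynomial reproduction of S_p is p + 1. -/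
open Polynomial

private lemma comp_sub_degree_lt (r : Polynomial ℝ) (c : ℝ) (hr : r ≠ 0) :
    (r.comp (X + C c) - r).degree < r.degree := by
  have hne : r.comp (X + C c) ≠ 0 := by
    simp [comp_eq_zero_iff, hr, X_add_C_ne_zero]
  have hd : (r.comp (X + C c)).degree = r.degree := by
    rw [degree_eq_natDegree hne, degree_eq_natDegree hr, natDegree_comp]
    simp
  have h := degree_sub_lt hd hne
    (by rw [leadingCoeff_comp (by simp), leadingCoeff_X_add_C]; simp)
  rwa [hd] at h

private lemma sub_comp_degree_lt (r : Polynomial ℝ) (c : ℝ) (hr : r ≠ 0) :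
    (r - r.comp (X + C c)).degree < r.degree := by
  have h := comp_sub_degree_lt r c hr
  rwa [← degree_neg, neg_sub] at h

private lemma comp_degree_eq (r : Polynomial ℝ) (c : ℝ) :
    (r.comp (X + C c)).degree = r.degree := by
  by_cases hr : r = 0
  · simp [hr]
  have hne : r.comp (X + C c) ≠ 0 := by
    simp [comp_eq_zero_iff, hr, X_add_C_ne_zero]
  rw [degree_eq_natDegree hne, degree_eq_natDegree hr, natDegree_comp]
  simp

private lemma degree_half_mul_le (r : Polynomial ℝ) :
    (C (1/2 : ℝ) * r).degree ≤ r.degree := by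
  refine (degree_mul_le _ _).trans ?_
  rw [degree_C (by norm_num : (1/2 : ℝ) ≠ 0), zero_add]

private lemma S_zero_seq : ∀ p : ℕ, ∀ i : ℤ, S p (fun _ => (0 : ℝ)) i = 0
  | 0, i => rfl
  | p + 1, i => by simp [S, S_zero_seq p]

private lemma key (q : Polynomial ℝ) (hq : q ≠ 0) :
    ∀ p : ℕ, ∃ a b : Polynomial ℝ,
      (a - q).degree < q.degree ∧ b.degree + (p : WithBot ℕ) < q.degree ∧
      ∀ i : ℤ, S p (fun k => q.eval (k : ℝ)) i =
        a.eval ((i : ℝ) / 2) + (if Odd i then b.eval ((i : ℝ) / 2) else 0) := by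
  have hqbot : (⊥ : WithBot ℕ) < q.degree :=
    bot_lt_iff_ne_bot.mpr (fun h => hq (degree_eq_bot.mp h))
  intro p
  induction p with
  | zero =>
    refine ⟨q, q.comp (X + C (-(1/2 : ℝ))) - q, by simpa using hqbot, ?_, ?_⟩
    · simpa using comp_sub_degree_lt q (-(1/2)) hq
    · intro i
      rcases Int.even_or_odd i with ⟨m, hm⟩ | ⟨m, hm⟩
      · have hfd : i.fdiv 2 = m := by rw [Int.fdiv_eq_ediv_of_nonneg _ (by norm_num)]; omega
        have hodd : ¬ Odd i := by rw [Int.odd_iff]; omega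
        have hval : ((i.fdiv 2 : ℤ) : ℝ) = (i : ℝ) / 2 := by
          rw [hfd]; have : (i : ℝ) = (m : ℝ) + m := by rw [hm]; push_cast; ring
          rw [this]; ring
        simp only [S, hval, if_neg hodd, add_zero]
      · have hfd : i.fdiv 2 = m := by rw [Int.fdiv_eq_ediv_of_nonneg _ (by norm_num)]; omega
        have hodd : Odd i := ⟨m, hm⟩
        have hval : ((i.fdiv 2 : ℤ) : ℝ) = (i : ℝ) / 2 + (-(1/2)) := by
          rw [hfd]; have : (i : ℝ) = 2 * (m : ℝ) + 1 := by rw [hm]; push_cast; ring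
          rw [this]; ring
        simp only [S, hval, if_pos hodd, eval_sub, eval_comp, eval_add, eval_X, eval_C]
        ring
  | succ p ih =>
    obtain ⟨a, b, ha, hb, hpt⟩ := ih
    have ha0 : a ≠ 0 := by
      rintro rfl
      rw [zero_sub, degree_neg] at ha
      exact lt_irrefl _ ha
    have hadeg : a.degree ≤ q.degree := by
      have h : a = (a - q) + q := by ring
      rw [h]
      exact (degree_add_le _ _).trans (max_le ha.le le_rfl)
    have hbdeg : b.degree < q.degree :=
      lt_of_le_of_lt (le_add_of_nonneg_right (by exact_mod_cast Nat.zero_le p)) hb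
    have hbcompdeg : (b.comp (X + C (1/2 : ℝ))).degree = b.degree := comp_degree_eq b _
    refine ⟨C (1/2 : ℝ) * (a + a.comp (X + C (1/2)) + b.comp (X + C (1/2))),
        C (1/2 : ℝ) * (b - b.comp (X + C (1/2))), ?_, ?_, ?_⟩
    · -- degree of a' - q
      have heq : C (1/2 : ℝ) * (a + a.comp (X + C (1/2)) + b.comp (X + C (1/2))) - q
          = C (1/2 : ℝ) * (a - q) + C (1/2 : ℝ) * (a.comp (X + C (1/2)) - q)
            + C (1/2 : ℝ) * b.comp (X + C (1/2)) := by
        have h2 : C (1/2 : ℝ) + C (1/2 : ℝ) = C 1 := by rw [← C_add]; norm_num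
        have := congrArg (· * q) h2
        simp only [add_mul, C_1, one_mul] at this
        linear_combination this
      rw [heq]
      have d1 : (C (1/2 : ℝ) * (a - q)).degree < q.degree :=
        lt_of_le_of_lt (degree_half_mul_le _) ha
      have d2 : (C (1/2 : ℝ) * (a.comp (X + C (1/2)) - q)).degree < q.degree := by
        refine lt_of_le_of_lt (degree_half_mul_le _) ?_
        have h3 : a.comp (X + C (1/2 : ℝ)) - q = (a.comp (X + C (1/2)) - a) + (a - q) := by ring
        rw [h3]
        exact lt_of_le_of_lt (degree_add_le _ _)
          (max_lt (lt_of_lt_of_le (comp_sub_degree_lt a _ ha0) hadeg) ha)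
      have d3 : (C (1/2 : ℝ) * b.comp (X + C (1/2))).degree < q.degree :=
        lt_of_le_of_lt (degree_half_mul_le _) (by rw [hbcompdeg]; exact hbdeg)
      exact lt_of_le_of_lt (degree_add_le _ _)
        (max_lt (lt_of_le_of_lt (degree_add_le _ _) (max_lt d1 d2)) d3)
    · -- degree of b'
      by_cases hb0 : b = 0
      · simp [hb0, WithBot.bot_add, hqbot]
      have hlt : (C (1/2 : ℝ) * (b - b.comp (X + C (1/2)))).degree < b.degree :=
        lt_of_le_of_lt (degree_half_mul_le _) (sub_comp_degree_lt b _ hb0)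
      by_cases hb'0 : C (1/2 : ℝ) * (b - b.comp (X + C (1/2))) = 0
      · rw [hb'0]
        simpa [WithBot.bot_add] using hqbot
      rw [degree_eq_natDegree hb0] at hlt hb
      rw [degree_eq_natDegree hb'0] at hlt ⊢
      have hmn : (C (1/2 : ℝ) * (b - b.comp (X + C (1/2)))).natDegree < b.natDegree := by
        exact_mod_cast hlt
      refine lt_of_le_of_lt ?_ hb
      exact_mod_cast Nat.cast_le.mpr (by omega :
        (C (1/2 : ℝ) * (b - b.comp (X + C (1/2)))).natDegree + (p + 1) ≤ b.natDegree + p)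
    · -- pointwise identity
      intro i
      have hstep : S (p + 1) (fun k => q.eval (k : ℝ)) i
          = (S p (fun k => q.eval (k : ℝ)) i + S p (fun k => q.eval (k : ℝ)) (i + 1)) / 2 := rfl
      rw [hstep, hpt i, hpt (i + 1)]
      have h2 : ((i + 1 : ℤ) : ℝ) / 2 = (i : ℝ) / 2 + 1/2 := by push_cast; ring
      rw [h2]
      by_cases hi : Odd i
      · have hi1 : ¬ Odd (i + 1) := by rw [Int.odd_iff] at *; omega
        rw [if_pos hi, if_neg hi1, if_pos hi]
        simp only [eval_mul, eval_C, eval_add, eval_sub, eval_comp, eval_X]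
        ring
      · have hi1 : Odd (i + 1) := by rw [Int.odd_iff] at *; omega
        rw [if_neg hi, if_pos hi1, if_neg hi]
        simp only [eval_mul, eval_C, eval_add, eval_sub, eval_comp, eval_X]
        ring

/-- For `p ≥ 1`, the order of polynomial reproduction of `S_p` is `p + 1`: for every
polynomial `𝔭` of degree `≤ p` there is a polynomial `𝔮` with `deg 𝔮 < deg 𝔭`
(`𝔮 = 0` if `deg 𝔭 = 0`) such that `S_p(𝔭|_ℤ) = 𝔭|_{2⁻¹ℤ} + 𝔮|_{2⁻¹ℤ}`. -/
theorem LaneRiesenfeld_polynomial_reproduction (p : ℕ) (hp : 1 ≤ p)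
    (𝔭 : Polynomial ℝ) (hdeg : 𝔭.degree ≤ (p : WithBot ℕ)) :
    ∃ 𝔮 : Polynomial ℝ, (𝔮 = 0 ∨ 𝔮.degree < 𝔭.degree) ∧
      ∀ i : ℤ, S p (fun k => 𝔭.eval (k : ℝ)) i = 𝔭.eval ((i : ℝ) / 2) + 𝔮.eval ((i : ℝ) / 2) := by
  by_cases h0 : 𝔭 = 0
  · refine ⟨0, Or.inl rfl, ?_⟩
    intro i
    subst h0
    simp only [eval_zero, add_zero]
    exact S_zero_seq p i
  obtain ⟨a, b, ha, hb, hpt⟩ := key 𝔭 h0 p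
  have hb0 : b = 0 := by
    by_contra hb0
    have h := lt_of_lt_of_le hb hdeg
    rw [degree_eq_natDegree hb0] at h
    have : b.natDegree + p < p := by exact_mod_cast h
    omega
  refine ⟨a - 𝔭, Or.inr ha, ?_⟩
  intro i
  rw [hpt i, hb0]
  simp only [eval_zero, if_pos, if_neg, ite_self, add_zero, eval_sub]
  ring
end

section
/- Let (a_j)_{j≥0} be a sequence of strictly positive real numbers and C, K ≥ 0 constants such that a_{j+1} ≥ (1/2 − C·a_j²)·a_j for all j ≥ 0 and a_j ≤ K·2^{−j} for all j ≥ 0. Then there exists a constant c > 0 such that a_j ≥ c·2^{−j} for all j ≥ 0. -/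
lemma exp_neg_two_le (x : ℝ) (hx0 : 0 ≤ x) (hx1 : x ≤ 1/2) :
    Real.exp (-(2 * x)) ≤ 1 - x := by
  have key : Real.exp (-(2 * x)) * Real.exp (2 * x) = 1 := by
    rw [← Real.exp_add]; ring_nf; exact Real.exp_zero
  have h1 := Real.add_one_le_exp (2 * x)
  have h2 := (Real.exp_pos (-(2 * x))).le
  nlinarith [mul_le_mul_of_nonneg_left h1 h2]

/-- Reverse estimate: if the positive sequence `a_j` satisfies
`a_{j+1} ≥ (1/2 − C·a_j²)·a_j` and `a_j ≤ K·2^{−j}`, then `a_j ≥ c·2^{−j}` for some `c > 0`. -/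
theorem geometric_lower_bound (a : ℕ → ℝ) (C K : ℝ)
    (ha : ∀ j, 0 < a j) (hC : 0 ≤ C) (hK : 0 ≤ K)
    (hrec : ∀ j, (1 / 2 - C * a j ^ 2) * a j ≤ a (j + 1))
    (hup : ∀ j, a j ≤ K * (1 / 2 : ℝ) ^ j) :
    ∃ c : ℝ, 0 < c ∧ ∀ j, c * (1 / 2 : ℝ) ^ j ≤ a j := by
  set D : ℝ := 2 * C * K ^ 2 with hDdef
  have hD0 : 0 ≤ D := by positivity
  set b : ℕ → ℝ := fun j => 2 ^ j * a j with hbdef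
  have hb : ∀ j, 0 < b j := fun j => mul_pos (pow_pos two_pos j) (ha j)
  -- key recursive estimate for b
  have hstep : ∀ j, b j * (1 - D * (1/4 : ℝ) ^ j) ≤ b (j + 1) := by
    intro j
    have hq : ((1/2 : ℝ) ^ j) ^ 2 = (1/4 : ℝ) ^ j := by
      rw [← pow_mul, mul_comm, pow_mul]; norm_num
    have h2 : a j ^ 2 ≤ K ^ 2 * (1/4 : ℝ) ^ j := by
      have := pow_le_pow_left₀ (ha j).le (hup j) 2
      rw [mul_pow, hq] at this; exact this
    have h6 : (2 : ℝ) ^ (j+1) * ((1 / 2 - C * a j ^ 2) * a j) ≤ 2 ^ (j+1) * a (j+1) :=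
      mul_le_mul_of_nonneg_left (hrec j) (by positivity)
    have h5 : 0 ≤ (2 : ℝ) ^ j * a j * (D * (1/4 : ℝ) ^ j - 2 * C * a j ^ 2) := by
      apply mul_nonneg (mul_pos (pow_pos two_pos j) (ha j)).le
      nlinarith
    show (2 : ℝ) ^ j * a j * (1 - D * (1/4 : ℝ) ^ j) ≤ 2 ^ (j+1) * a (j+1)
    rw [pow_succ] at h6 ⊢
    nlinarith [h5, h6]
  -- choose N with D * (1/4)^N ≤ 1/2
  obtain ⟨N, hN⟩ : ∃ N : ℕ, D * (1/4 : ℝ) ^ N ≤ 1/2 := by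
    obtain ⟨N, hN⟩ := pow_unbounded_of_one_lt (2 * D) (by norm_num : (1:ℝ) < 4)
    refine ⟨N, ?_⟩
    have h4 : (0:ℝ) < 4 ^ N := by positivity
    have : (1/4 : ℝ) ^ N = ((4:ℝ) ^ N)⁻¹ := by
      rw [one_div, inv_pow]
    rw [this]
    rw [mul_inv_le_iff₀ h4]
    nlinarith
  -- epsilon smallness on tail
  have heps : ∀ m : ℕ, D * (1/4 : ℝ) ^ (N + m) ≤ 1/2 := by
    intro m
    have : (1/4 : ℝ) ^ (N + m) ≤ (1/4 : ℝ) ^ N :=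
      pow_le_pow_of_le_one (by norm_num) (by norm_num) (Nat.le_add_right N m)
    nlinarith
  set T : ℕ → ℝ := fun m => ∑ i ∈ Finset.range m, D * (1/4 : ℝ) ^ (N + i) with hTdef
  have hT0 : ∀ m, 0 ≤ T m := fun m =>
    Finset.sum_nonneg fun i _ => by positivity
  have hT1 : ∀ m, T m ≤ 1 := by
    intro m
    have hsum : ∑ i ∈ Finset.range m, (1/4 : ℝ) ^ i ≤ 4/3 := by
      rw [geom_sum_eq (by norm_num : (1/4 : ℝ) ≠ 1)]
      have : (0:ℝ) < (1/4 : ℝ) ^ m := by positivity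
      rw [div_le_iff_of_neg (by norm_num : (1/4 : ℝ) - 1 < 0)]
      nlinarith
    have : T m ≤ ∑ i ∈ Finset.range m, (1/2 : ℝ) * (1/4 : ℝ) ^ i := by
      apply Finset.sum_le_sum
      intro i _
      rw [pow_add]
      have h4i : (0:ℝ) ≤ (1/4 : ℝ) ^ i := by positivity
      nlinarith [heps 0]
    rw [← Finset.mul_sum] at this
    nlinarith
  -- tail lower bound
  have htail : ∀ m : ℕ, b N * Real.exp (-(2 * T m)) ≤ b (N + m) := by
    intro m
    induction m with
    | zero => simp [hTdef]
    | succ m ih =>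
      have hTs : T (m + 1) = T m + D * (1/4 : ℝ) ^ (N + m) := Finset.sum_range_succ _ m
      set ε : ℝ := D * (1/4 : ℝ) ^ (N + m) with hε
      have hε0 : 0 ≤ ε := by positivity
      have hε1 : ε ≤ 1/2 := heps m
      have hexp : Real.exp (-(2 * ε)) ≤ 1 - ε := exp_neg_two_le ε hε0 hε1
      have hsplit : Real.exp (-(2 * T (m+1))) = Real.exp (-(2 * T m)) * Real.exp (-(2 * ε)) := by
        rw [← Real.exp_add, hTs]; ring_nf
      have step := hstep (N + m)
      calc b N * Real.exp (-(2 * T (m+1)))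
          = (b N * Real.exp (-(2 * T m))) * Real.exp (-(2 * ε)) := by rw [hsplit]; ring
        _ ≤ b (N + m) * (1 - ε) := by
            apply mul_le_mul ih hexp (Real.exp_pos _).le (hb _).le
        _ ≤ b (N + m + 1) := step
  have htail' : ∀ j, N ≤ j → b N * Real.exp (-2) ≤ b j := by
    intro j hj
    obtain ⟨m, rfl⟩ := Nat.exists_eq_add_of_le hj
    refine le_trans ?_ (htail m)
    apply mul_le_mul_of_nonneg_left _ (hb N).le
    apply Real.exp_le_exp.mpr
    nlinarith [hT1 m, hT0 m]
  -- assemble the constant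
  have hne : (Finset.range (N + 1)).Nonempty := ⟨0, by simp⟩
  set c₁ : ℝ := (Finset.range (N + 1)).inf' hne b with hc₁
  have hc₁pos : 0 < c₁ := by
    rw [hc₁, Finset.lt_inf'_iff]
    exact fun i _ => hb i
  refine ⟨min c₁ (b N * Real.exp (-2)), lt_min hc₁pos (mul_pos (hb N) (Real.exp_pos _)), ?_⟩
  intro j
  have hcb : min c₁ (b N * Real.exp (-2)) ≤ b j := by
    rcases le_or_gt j N with h | h
    · exact le_trans (min_le_left _ _)
        (Finset.inf'_le b (Finset.mem_range.mpr (by omega)))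
    · exact le_trans (min_le_right _ _) (htail' j h.le)
  have hone : (2:ℝ) ^ j * (1/2 : ℝ) ^ j = 1 := by
    rw [← mul_pow]; norm_num
  calc min c₁ (b N * Real.exp (-2)) * (1/2 : ℝ) ^ j
      ≤ b j * (1/2 : ℝ) ^ j := by
        exact mul_le_mul_of_nonneg_right hcb (by positivity)
    _ = (2 ^ j * (1/2 : ℝ) ^ j) * a j := by rw [hbdef]; ring
    _ = a j := by rw [hone, one_mul]
end

section
/- Let v be a simple L-periodic arc-length curve of class C² whose signed curvature satisfies k(s) ≥ c_k for all s, for some constant c_k > 0 (a strictly convex closed curve). Then there exists a constant c > 0 such that for all s, s' ∈ ℝ: |v'(s) − v'(s')| ≥ c · min(|s − s'| mod L, L − (|s − s'| mod L)), i.e. the tangent map v' is invertible on a period and its inverse is Lipschitz continuous with respect to the periodic distance. -/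
/-- Euclidean scalar product on `ℝ²`. -/
noncomputable def dot (u w : ℝ × ℝ) : ℝ := u.1 * w.1 + u.2 * w.2

/-- Euclidean norm on `ℝ²`. -/
noncomputable def enorm2 (u : ℝ × ℝ) : ℝ := Real.sqrt (u.1 ^ 2 + u.2 ^ 2)

/-- Rotation by 90°: `u^⊥ = (−u₂, u₁)`. -/
def perp (u : ℝ × ℝ) : ℝ × ℝ := (-u.2, u.1)

/-- Signed curvature `k(s) = v''(s)·(v'(s))^⊥` of an arc-length parametrized curve. -/
noncomputable def curv (v : ℝ → ℝ × ℝ) (s : ℝ) : ℝ :=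
  dot (deriv (deriv v) s) (perp (deriv v s))

namespace TMLB
open Real Set Filter Topology

lemma hasDerivAt_fst {f : ℝ → ℝ × ℝ} {f' : ℝ × ℝ} {x : ℝ} (h : HasDerivAt f f' x) :
    HasDerivAt (fun s => (f s).1) f'.1 x := by
  have := (ContinuousLinearMap.fst ℝ ℝ ℝ).hasFDerivAt.comp_hasDerivAt x h
  simpa [Function.comp_def] using this

lemma hasDerivAt_snd {f : ℝ → ℝ × ℝ} {f' : ℝ × ℝ} {x : ℝ} (h : HasDerivAt f f' x) :
    HasDerivAt (fun s => (f s).2) f'.2 x := by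
  have := (ContinuousLinearMap.snd ℝ ℝ ℝ).hasFDerivAt.comp_hasDerivAt x h
  simpa [Function.comp_def] using this

lemma jordan_sin {x : ℝ} (h0 : 0 ≤ x) (h1 : x ≤ π) : 2/π * min x (π - x) ≤ Real.sin x := by
  rcases le_total x (π/2) with h | h
  · rw [min_eq_left (by linarith)]
    exact Real.mul_le_sin h0 h
  · rw [min_eq_right (by linarith)]
    have h2 := Real.mul_le_sin (x := π - x) (by linarith) (by linarith)
    rwa [Real.sin_pi_sub] at h2

lemma enorm2_sub_comm (p q : ℝ × ℝ) : enorm2 (p - q) = enorm2 (q - p) := by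
  have h : (p - q).1^2 + (p - q).2^2 = (q - p).1^2 + (q - p).2^2 := by
    simp only [Prod.fst_sub, Prod.snd_sub]
    ring
  rw [enorm2, enorm2, h]

/-- Existence of a C¹ angle function for the unit tangent. -/
lemma exists_theta (v : ℝ → ℝ × ℝ) (hreg : ContDiff ℝ 2 v)
    (hunit : ∀ s, dot (deriv v s) (deriv v s) = 1) :
    ∃ θ : ℝ → ℝ, (∀ s, HasDerivAt θ (curv v s) s) ∧
      (∀ s, deriv v s = (Real.cos (θ s), Real.sin (θ s))) := by
  have h2 : ContDiff ℝ (1 + 1) v := by norm_num at hreg ⊢; exact hreg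
  rw [contDiff_succ_iff_deriv] at h2
  have hv_diff : Differentiable ℝ v := h2.1
  have hV_cd : ContDiff ℝ 1 (deriv v) := h2.2.2
  rw [contDiff_one_iff_deriv] at hV_cd
  have hV_diff : Differentiable ℝ (deriv v) := hV_cd.1
  have hA_cont : Continuous (deriv (deriv v)) := hV_cd.2
  set V : ℝ → ℝ × ℝ := deriv v with hV
  set A : ℝ → ℝ × ℝ := deriv (deriv v) with hA
  have hk_cont : Continuous (curv v) := by
    have h1 : Continuous fun s => (A s).1 := (continuous_fst.comp hA_cont)
    have h2 : Continuous fun s => (A s).2 := (continuous_snd.comp hA_cont)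
    have h3 : Continuous fun s => (V s).1 := (continuous_fst.comp hV_cd.1.continuous)
    have h4 : Continuous fun s => (V s).2 := (continuous_snd.comp hV_cd.1.continuous)
    have : (curv v) = fun s => (A s).1 * (-(V s).2) + (A s).2 * (V s).1 := rfl
    rw [this]; fun_prop
  -- initial angle
  set z : ℂ := ⟨(V 0).1, (V 0).2⟩ with hz
  have hzabs : ‖z‖ = 1 := by
    have h0 := hunit 0
    simp only [dot] at h0
    have : ‖z‖ = Real.sqrt ((V 0).1 * (V 0).1 + (V 0).2 * (V 0).2) := by
      rw [Complex.norm_def, Complex.normSq_mk]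
    rw [this, h0, Real.sqrt_one]
  have hz0 : z ≠ 0 := by
    intro h; rw [h] at hzabs; simp at hzabs
  set φ₀ : ℝ := Complex.arg z with hφ₀
  have hcos0 : Real.cos φ₀ = (V 0).1 := by
    rw [hφ₀, Complex.cos_arg hz0, hzabs]; simp [hz]
  have hsin0 : Real.sin φ₀ = (V 0).2 := by
    rw [hφ₀, Complex.sin_arg, hzabs]; simp [hz]
  -- the angle function
  set θ : ℝ → ℝ := fun s => φ₀ + ∫ t in (0:ℝ)..s, curv v t with hθ
  have hθd : ∀ s, HasDerivAt θ (curv v s) s := by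
    intro s
    exact ((hk_cont.integral_hasStrictDerivAt 0 s).hasDerivAt).const_add φ₀
  refine ⟨θ, hθd, ?_⟩
  -- component derivatives of V
  have hV1 : ∀ s, HasDerivAt (fun u => (V u).1) ((A s).1) s := fun s =>
    hasDerivAt_fst (hV_diff s).hasDerivAt
  have hV2 : ∀ s, HasDerivAt (fun u => (V u).2) ((A s).2) s := fun s =>
    hasDerivAt_snd (hV_diff s).hasDerivAt
  -- orthogonality A ⟂ V
  have hAV : ∀ s, (A s).1 * (V s).1 + (A s).2 * (V s).2 = 0 := by
    intro s
    have hu : (fun u => (V u).1 * (V u).1 + (V u).2 * (V u).2) = fun _ => (1:ℝ) := by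
      funext u; exact hunit u
    have hd : HasDerivAt (fun u => (V u).1 * (V u).1 + (V u).2 * (V u).2)
        ((A s).1 * (V s).1 + (V s).1 * (A s).1 + ((A s).2 * (V s).2 + (V s).2 * (A s).2)) s :=
      ((hV1 s).mul (hV1 s)).add ((hV2 s).mul (hV2 s))
    rw [hu] at hd
    have h0 : ((A s).1 * (V s).1 + (V s).1 * (A s).1 + ((A s).2 * (V s).2 + (V s).2 * (A s).2))
        = 0 := hd.unique (hasDerivAt_const s 1)
    nlinarith [h0]
  -- A = k • perp V
  have hA1 : ∀ s, (A s).1 = -(curv v s) * (V s).2 := by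
    intro s
    have h1 := hAV s
    have h2 := hunit s
    simp only [dot] at h2
    have hk : curv v s = (A s).1 * (-(V s).2) + (A s).2 * (V s).1 := rfl
    linear_combination (V s).2 * hk + (V s).1 * h1 - (A s).1 * h2
  have hA2 : ∀ s, (A s).2 = (curv v s) * (V s).1 := by
    intro s
    have h1 := hAV s
    have h2 := hunit s
    simp only [dot] at h2
    have hk : curv v s = (A s).1 * (-(V s).2) + (A s).2 * (V s).1 := rfl
    linear_combination (-(V s).1) * hk + (V s).2 * h1 - (A s).2 * h2
  -- F = |V - (cos θ, sin θ)|² is constant 0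
  set F : ℝ → ℝ := fun s => ((V s).1 - Real.cos (θ s))^2 + ((V s).2 - Real.sin (θ s))^2 with hF
  have hFd : ∀ s, HasDerivAt F
      (2 * ((V s).1 - Real.cos (θ s)) * ((A s).1 - (-Real.sin (θ s) * curv v s))
        + 2 * ((V s).2 - Real.sin (θ s)) * ((A s).2 - Real.cos (θ s) * curv v s)) s := by
    intro s
    have hc : HasDerivAt (fun u => Real.cos (θ u)) (-Real.sin (θ s) * curv v s) s :=
      (hθd s).cos
    have hs : HasDerivAt (fun u => Real.sin (θ u)) (Real.cos (θ s) * curv v s) s :=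
      (hθd s).sin
    have d1 : HasDerivAt (fun u => ((V u).1 - Real.cos (θ u))^2)
        (2 * ((V s).1 - Real.cos (θ s)) * ((A s).1 - (-Real.sin (θ s) * curv v s))) s := by
      have := ((hV1 s).sub hc).pow 2
      simpa [Pi.sub_def, Pi.pow_def, mul_comm, mul_assoc, mul_left_comm] using this
    have d2 : HasDerivAt (fun u => ((V u).2 - Real.sin (θ u))^2)
        (2 * ((V s).2 - Real.sin (θ s)) * ((A s).2 - Real.cos (θ s) * curv v s)) s := by
      have := ((hV2 s).sub hs).pow 2
      simpa [Pi.sub_def, Pi.pow_def, mul_comm, mul_assoc, mul_left_comm] using this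
    exact d1.add d2
  have hF0 : ∀ s, HasDerivAt F 0 s := by
    intro s
    have h := hFd s
    have : (2 * ((V s).1 - Real.cos (θ s)) * ((A s).1 - (-Real.sin (θ s) * curv v s))
        + 2 * ((V s).2 - Real.sin (θ s)) * ((A s).2 - Real.cos (θ s) * curv v s)) = 0 := by
      rw [hA1 s, hA2 s]; ring
    rwa [this] at h
  have hFconst : ∀ s, F s = F 0 := by
    intro s
    exact is_const_of_deriv_eq_zero (fun x => (hF0 x).differentiableAt)
      (fun x => (hF0 x).deriv) s 0
  have hθ0 : θ 0 = φ₀ := by simp [hθ]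
  have hF0val : F 0 = 0 := by
    simp only [hF, hθ0, hcos0, hsin0]; ring
  intro s
  have hFs : F s = 0 := by rw [hFconst s, hF0val]
  simp only [hF] at hFs
  have e1 : (V s).1 - Real.cos (θ s) = 0 := by nlinarith [sq_nonneg ((V s).1 - Real.cos (θ s)), sq_nonneg ((V s).2 - Real.sin (θ s))]
  have e2 : (V s).2 - Real.sin (θ s) = 0 := by nlinarith [sq_nonneg ((V s).1 - Real.cos (θ s)), sq_nonneg ((V s).2 - Real.sin (θ s))]
  have : V s = (Real.cos (θ s), Real.sin (θ s)) := by
    ext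
    · linarith
    · linarith
  exact this


/-- Crossing lemma: a continuous planar arc `(ξ, η)` over `[s0, s2]` whose height `η`
rises strictly on `[s0, sp]` and falls strictly on `[sp, s2]`, with equal endpoint
heights `0`, with `ξ` strictly decreasing near the top, and whose endpoint `ξ`-values
satisfy `ξ s0 = 0 < ξ s2`, must have a self-intersection. -/
lemma crossing {η ξ : ℝ → ℝ} {s0 sh sp sd s2 : ℝ}
    (hcη : Continuous η) (hcξ : Continuous ξ)
    (h01 : s0 < sh) (h12 : sh < sp) (h23 : sp < sd) (h34 : sd < s2)
    (mono : StrictMonoOn η (Set.Icc s0 sp))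
    (anti : StrictAntiOn η (Set.Icc sp s2))
    (xanti : StrictAntiOn ξ (Set.Icc sh sd))
    (hη0 : η s0 = 0) (hη2 : η s2 = 0)
    (hξ0 : ξ s0 = 0) (hξ2 : 0 < ξ s2) :
    ∃ a b : ℝ, s0 < a ∧ a < b ∧ b < s2 ∧ η a = η b ∧ ξ a = ξ b := by
  have h02 : s0 < sp := h01.trans h12
  have h25 : sp < s2 := h23.trans h34
  set h : ℝ := η sp with hh
  have hpos : 0 < h := by
    have := mono (left_mem_Icc.2 h02.le) (right_mem_Icc.2 h02.le) h02
    rwa [hη0] at this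
  have hd_lt : η sd < h := anti (left_mem_Icc.2 h25.le) ⟨h23.le, h34.le⟩ h23
  have hh_lt : η sh < h := mono ⟨h01.le, h12.le⟩ (right_mem_Icc.2 h02.le) h12
  have hd_pos : 0 < η sd := by
    have := anti ⟨h23.le, h34.le⟩ (right_mem_Icc.2 h25.le) h34
    rwa [hη2] at this
  have hh_pos : 0 < η sh := by
    have := mono (left_mem_Icc.2 h02.le) ⟨h01.le, h12.le⟩ h01
    rwa [hη0] at this
  set m : ℝ := max (η sd) (η sh) with hm
  have hm_lt : m < h := max_lt hd_lt hh_lt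
  have hm_pos : 0 < m := lt_max_of_lt_left hd_pos
  set val : ℝ := (m + h) / 2 with hval
  have hval1 : m < val := by rw [hval]; linarith
  have hval2 : val < h := by rw [hval]; linarith
  have hval_pos : 0 < val := lt_trans hm_pos hval1
  -- the point s⁻ on the ascending branch with η = val
  have hsm : ∃ sm ∈ Ioo s0 sp, η sm = val := by
    have := intermediate_value_Ioo h02.le (hcη.continuousOn (s := Icc s0 sp))
    have hmem : val ∈ Ioo (η s0) (η sp) := by rw [hη0]; exact ⟨hval_pos, hval2⟩
    rcases this hmem with ⟨sm, hsm1, hsm2⟩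
    exact ⟨sm, hsm1, hsm2⟩
  obtain ⟨sm, hsmIoo, hsmval⟩ := hsm
  have hsm_gt_sh : sh < sm := by
    by_contra hle
    push_neg at hle
    have := mono.monotoneOn ⟨hsmIoo.1.le, hsmIoo.2.le⟩ ⟨h01.le, h12.le⟩ hle
    rw [hsmval] at this
    have hshm : η sh ≤ m := le_max_right _ _
    linarith
  -- the inverse of η on the descending branch, via compactness
  have hmemJ : ∀ x ∈ Icc sp s2, η x ∈ Icc (0:ℝ) h := by
    intro x hx
    constructor
    · have := anti.antitoneOn hx (right_mem_Icc.2 h25.le) hx.2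
      rwa [hη2] at this
    · exact anti.antitoneOn (left_mem_Icc.2 h25.le) hx hx.1
  have hsurJ : ∀ y ∈ Icc (0:ℝ) h, ∃ x ∈ Icc sp s2, η x = y := by
    intro y hy
    have := intermediate_value_Icc' h25.le (hcη.continuousOn (s := Icc sp s2))
    have : y ∈ η '' Icc sp s2 := by
      apply this; rw [hη2, ← hh]; exact hy
    rcases this with ⟨x, hx1, hx2⟩
    exact ⟨x, hx1, hx2⟩
  -- build homeomorphism from [sp,s2] to [0,h]
  set FF : Icc sp s2 → Icc (0:ℝ) h := fun x => ⟨η x, hmemJ x x.2⟩ with hFF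
  have hFFc : Continuous FF := by
    apply Continuous.subtype_mk
    exact hcη.comp continuous_subtype_val
  have hFFbij : Function.Bijective FF := by
    constructor
    · intro a b hab
      have : η (a : ℝ) = η (b : ℝ) := congrArg Subtype.val hab
      exact Subtype.ext (anti.injOn a.2 b.2 this)
    · intro y
      rcases hsurJ y y.2 with ⟨x, hx1, hx2⟩
      exact ⟨⟨x, hx1⟩, Subtype.ext hx2⟩
  set E : Icc sp s2 ≃ Icc (0:ℝ) h := Equiv.ofBijective FF hFFbij with hE
  have hEc : Continuous E := hFFc
  set Homeo : Icc sp s2 ≃ₜ Icc (0:ℝ) h := Continuous.homeoOfEquivCompactToT2 hEc with hHom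
  set g : Icc (0:ℝ) h → ℝ := fun y => (Homeo.symm y : ℝ) with hg
  have hgc : Continuous g := continuous_subtype_val.comp Homeo.symm.continuous
  have hgJ : ∀ y, g y ∈ Icc sp s2 := fun y => (Homeo.symm y).2
  have hgη : ∀ y : Icc (0:ℝ) h, η (g y) = (y : ℝ) := by
    intro y
    have : FF (Homeo.symm y) = y := by
      have : E (Homeo.symm y) = y := by
        have := Homeo.apply_symm_apply y
        exact this
      exact this
    exact congrArg Subtype.val this
  -- clamp composition
  set q : ℝ → ℝ := fun s => ξ s - ξ (g (projIcc (0:ℝ) h hpos.le (η s))) with hq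
  have hqc : Continuous q :=
    hcξ.sub (hcξ.comp (hgc.comp (continuous_projIcc.comp hcη)))
  -- q s0 < 0
  have hproj0 : projIcc (0:ℝ) h hpos.le (η s0) = ⟨0, le_refl 0, hpos.le⟩ := by
    rw [hη0]; exact projIcc_of_mem hpos.le ⟨le_refl 0, hpos.le⟩
  have hg0 : g (⟨0, le_refl 0, hpos.le⟩ : Icc (0:ℝ) h) = s2 := by
    have h1 : η (g ⟨0, le_refl 0, hpos.le⟩) = 0 := hgη _
    apply anti.injOn (hgJ _) (right_mem_Icc.2 h25.le)
    rw [h1, hη2]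
  have hqs0 : q s0 < 0 := by
    simp only [hq, hproj0, hg0, hξ0]
    linarith
  -- q sm > 0
  have hsmIcc : η sm ∈ Icc (0:ℝ) h := by
    rw [hsmval]; exact ⟨hval_pos.le, hval2.le⟩
  have hprojm : projIcc (0:ℝ) h hpos.le (η sm) = ⟨η sm, hsmIcc⟩ :=
    projIcc_of_mem hpos.le hsmIcc
  set tp : ℝ := g ⟨η sm, hsmIcc⟩ with htp
  have htpη : η tp = val := by rw [htp, hgη]; exact hsmval
  have htpJ : tp ∈ Icc sp s2 := hgJ _
  have htp_lt_sd : tp < sd := by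
    by_contra hle
    push_neg at hle
    have := anti.antitoneOn ⟨h23.le, h34.le⟩ htpJ hle
    rw [htpη] at this
    have hsdm : η sd ≤ m := le_max_left _ _
    linarith
  have htp_gt_sp : sp < tp := by
    rcases lt_or_eq_of_le htpJ.1 with hlt | heq
    · exact hlt
    · exfalso
      have hv : η sp = val := by rw [heq, htpη]
      rw [← hh] at hv
      linarith
  have hqsm : 0 < q sm := by
    have hx1 : sm ∈ Icc sh sd := ⟨hsm_gt_sh.le, (hsmIoo.2.trans h23).le⟩
    have hx2 : tp ∈ Icc sh sd := ⟨(h12.trans htp_gt_sp).le, htp_lt_sd.le⟩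
    have : ξ tp < ξ sm := xanti hx1 hx2 (hsmIoo.2.trans htp_gt_sp)
    simp only [hq, hprojm, ← htp]
    linarith
  -- IVT for q on [s0, sm]
  have hIVT : (0:ℝ) ∈ q '' Ioo s0 sm := by
    apply intermediate_value_Ioo hsmIoo.1.le (hqc.continuousOn)
    exact ⟨hqs0, hqsm⟩
  rcases hIVT with ⟨a, haIoo, haq⟩
  have haIcc : a ∈ Icc s0 sp := ⟨haIoo.1.le, (haIoo.2.trans hsmIoo.2).le⟩
  have haη : η a ∈ Icc (0:ℝ) h := by
    constructor
    · rw [← hη0]; exact mono.monotoneOn (left_mem_Icc.2 h02.le) haIcc haIcc.1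
    · exact mono.monotoneOn haIcc (right_mem_Icc.2 h02.le) haIcc.2
  set b : ℝ := g ⟨η a, haη⟩ with hb
  have hbJ : b ∈ Icc sp s2 := hgJ _
  have hbη : η b = η a := by rw [hb, hgη]
  have hproja : projIcc (0:ℝ) h hpos.le (η a) = ⟨η a, haη⟩ := projIcc_of_mem hpos.le haη
  have hbξ : ξ a = ξ b := by
    have : q a = 0 := haq
    simp only [hq, hproja] at this
    rw [← hb] at this
    linarith
  have hab : a < b := by
    have hba : a < sp := haIoo.2.trans hsmIoo.2
    rcases lt_or_eq_of_le hbJ.1 with hlt | heq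
    · exact hba.trans hlt
    · exfalso
      have : η a = h := by rw [← hbη, ← heq, hh]
      have := mono.injOn haIcc (right_mem_Icc.2 h02.le) (by rw [this, hh])
      rw [this] at hba; exact lt_irrefl _ hba
  have hbs2 : b < s2 := by
    rcases lt_or_eq_of_le hbJ.2 with hlt | heq
    · exact hlt
    · exfalso
      have : η a = 0 := by rw [← hbη, heq, hη2]
      have := mono.injOn (left_mem_Icc.2 h02.le) haIcc (by rw [this, hη0])
      rw [← this] at haIoo
      exact lt_irrefl _ haIoo.1
  exact ⟨a, b, haIoo.1, hab, hbs2, hbη.symm, hbξ⟩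


set_option maxHeartbeats 1600000 in
/-- If the total turning over a period is at least `4π`, the curve self-intersects. -/
lemma umlauf (L : ℝ) (hL : 0 < L) (v : ℝ → ℝ × ℝ) (hv_cont : Continuous v)
    (hper : ∀ s, v (s + L) = v s)
    (hinj : ∀ x y : ℝ, v x = v y → 0 < y - x → y - x < L → False)
    (θ k : ℝ → ℝ) (hk_pos : ∀ s, 0 < k s)
    (hθd : ∀ s, HasDerivAt θ (k s) s)
    (hvd : ∀ s, HasDerivAt v (Real.cos (θ s), Real.sin (θ s)) s)
    (T : ℝ) (hθshift : ∀ s, θ (s + L) = θ s + T)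
    (n : ℤ) (hTn : T = n * (2 * π)) (hn2 : 2 ≤ n) : False := by
  have hπ := Real.pi_pos
  have hπ3 : π > 3 := by have := Real.pi_gt_d6; linarith
  have hT4 : 4 * π ≤ T := by
    rw [hTn]
    have h2n : (2:ℝ) ≤ (n:ℝ) := by exact_mod_cast hn2
    nlinarith
  have hT_pos : 0 < T := by linarith
  have hT2 : 2 * π < T := by linarith
  have hθc : Continuous θ := by
    have : Differentiable ℝ θ := fun s => (hθd s).differentiableAt
    exact this.continuous
  have hmono : StrictMono θ := by
    apply strictMono_of_deriv_pos
    intro s; rw [(hθd s).deriv]; exact hk_pos s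
  -- integer shifts of θ
  have hθint : ∀ (s : ℝ) (j : ℤ), θ (s + j * L) = θ s + j * T := by
    intro s j
    have hρ : Function.Periodic (fun u => θ u - (T / L) * u) L := by
      intro u
      simp only
      rw [hθshift]
      field_simp
      ring
    have h2 := (hρ.int_mul j) s
    have h3 : T / L * ((j:ℝ) * L) = (j:ℝ) * T := by
      field_simp
    nlinarith [h2, h3]
  -- surjectivity of θ
  have hsurj : Function.Surjective θ := by
    intro y
    obtain ⟨j1, hj1⟩ := exists_int_lt ((y - θ 0) / T)
    obtain ⟨j2, hj2⟩ := exists_int_gt ((y - θ 0) / T)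
    have hj1y : θ ((j1:ℝ) * L) ≤ y := by
      have h0 := hθint 0 j1
      rw [zero_add] at h0
      rw [h0]
      have : (j1:ℝ) * T < y - θ 0 := (lt_div_iff₀ hT_pos).1 hj1
      linarith
    have hj2y : y ≤ θ ((j2:ℝ) * L) := by
      have h0 := hθint 0 j2
      rw [zero_add] at h0
      rw [h0]
      have : y - θ 0 < (j2:ℝ) * T := (div_lt_iff₀ hT_pos).1 hj2
      linarith
    have hj12 : (j1:ℝ) * L ≤ (j2:ℝ) * L := by
      have : (j1:ℝ) < (j2:ℝ) := hj1.trans hj2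
      nlinarith
    obtain ⟨x, _, hx⟩ := intermediate_value_Icc hj12 hθc.continuousOn ⟨hj1y, hj2y⟩
    exact ⟨x, hx⟩
  -- the inverse function ι
  set E := StrictMono.orderIsoOfSurjective θ hmono hsurj with hE
  set ι : ℝ → ℝ := fun t => E.symm t with hι
  have hEθ : ∀ s, E s = θ s := fun s =>
    congrFun (StrictMono.coe_orderIsoOfSurjective θ hmono hsurj) s
  have hθι : ∀ t, θ (ι t) = t := by
    intro t
    have := E.apply_symm_apply t
    rw [← hEθ]
    exact this
  have hιθ : ∀ s, ι (θ s) = s := by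
    intro s
    have := E.symm_apply_apply s
    rw [hEθ] at this
    exact this
  have hι_mono : StrictMono ι := fun a b hab => E.symm.strictMono hab
  have hι_cont : Continuous ι := OrderIso.continuous E.symm
  have hι_shift : ∀ t, ι (t + T) = ι t + L := by
    intro t
    apply hmono.injective
    rw [hθι, hθshift, hθι]
  have hιd : ∀ t, HasDerivAt ι (k (ι t))⁻¹ t := by
    intro t
    exact HasDerivAt.of_local_left_inverse hι_cont.continuousAt (hθd (ι t))
      (ne_of_gt (hk_pos _)) (Filter.Eventually.of_forall hθι)
  -- coordinates of the curve in the turning parameter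
  set X : ℝ → ℝ := fun t => (v (ι t)).1 with hX
  set Y : ℝ → ℝ := fun t => (v (ι t)).2 with hY
  set r : ℝ → ℝ := fun t => (k (ι t))⁻¹ with hr
  have hr_pos : ∀ t, 0 < r t := fun t => inv_pos.2 (hk_pos _)
  have hXd : ∀ t, HasDerivAt X (r t * Real.cos t) t := by
    intro t
    have hcomp : HasDerivAt (v ∘ ι)
        ((k (ι t))⁻¹ • (Real.cos (θ (ι t)), Real.sin (θ (ι t)))) t :=
      (hvd (ι t)).scomp t (hιd t)
    have := hasDerivAt_fst hcomp
    simp only [hθι, Prod.smul_fst, smul_eq_mul] at this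
    exact this
  have hYd : ∀ t, HasDerivAt Y (r t * Real.sin t) t := by
    intro t
    have hcomp : HasDerivAt (v ∘ ι)
        ((k (ι t))⁻¹ • (Real.cos (θ (ι t)), Real.sin (θ (ι t)))) t :=
      (hvd (ι t)).scomp t (hιd t)
    have := hasDerivAt_snd hcomp
    simp only [hθι, Prod.smul_snd, smul_eq_mul] at this
    exact this
  have hXc : Continuous X := continuous_fst.comp (hv_cont.comp hι_cont)
  have hYc : Continuous Y := continuous_snd.comp (hv_cont.comp hι_cont)
  have hXT : ∀ t, X (t + T) = X t := by
    intro t; simp only [hX]; rw [hι_shift, hper]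
  have hYT : ∀ t, Y (t + T) = Y t := by
    intro t; simp only [hY]; rw [hι_shift, hper]
  -- the chord functions
  set Dx : ℝ → ℝ := fun t => X (t + 2*π) - X t with hDx
  set Dy : ℝ → ℝ := fun t => Y (t + 2*π) - Y t with hDy
  set w : ℝ → ℝ := fun t => Dy t * Real.cos t - Dx t * Real.sin t with hw
  set g1 : ℝ → ℝ := fun t => Dx t * Real.cos t + Dy t * Real.sin t with hg1
  have hwc : Continuous w := by
    apply Continuous.sub
    · exact ((hYc.comp (continuous_id.add continuous_const)).sub hYc).mul Real.continuous_cos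
    · exact ((hXc.comp (continuous_id.add continuous_const)).sub hXc).mul Real.continuous_sin
  have hDxd : ∀ t, HasDerivAt Dx ((r (t + 2*π) - r t) * Real.cos t) t := by
    intro t
    have h1 : HasDerivAt (fun u => X (u + 2*π)) (r (t + 2*π) * Real.cos (t + 2*π)) t :=
      HasDerivAt.comp_add_const t (2*π) (hXd (t + 2*π))
    have h2 := h1.sub (hXd t)
    rw [Real.cos_add_two_pi] at h2
    have : r (t + 2*π) * Real.cos t - r t * Real.cos t = (r (t + 2*π) - r t) * Real.cos t := by
      ring
    rwa [this] at h2
  have hDyd : ∀ t, HasDerivAt Dy ((r (t + 2*π) - r t) * Real.sin t) t := by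
    intro t
    have h1 : HasDerivAt (fun u => Y (u + 2*π)) (r (t + 2*π) * Real.sin (t + 2*π)) t :=
      HasDerivAt.comp_add_const t (2*π) (hYd (t + 2*π))
    have h2 := h1.sub (hYd t)
    rw [Real.sin_add_two_pi] at h2
    have : r (t + 2*π) * Real.sin t - r t * Real.sin t = (r (t + 2*π) - r t) * Real.sin t := by
      ring
    rwa [this] at h2
  have hwd : ∀ t, HasDerivAt w (-g1 t) t := by
    intro t
    have h1 : HasDerivAt (fun u => Dy u * Real.cos u)
        ((r (t + 2*π) - r t) * Real.sin t * Real.cos t + Dy t * (-Real.sin t)) t :=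
      (hDyd t).mul (Real.hasDerivAt_cos t)
    have h2 : HasDerivAt (fun u => Dx u * Real.sin u)
        ((r (t + 2*π) - r t) * Real.cos t * Real.sin t + Dx t * Real.cos t) t :=
      (hDxd t).mul (Real.hasDerivAt_sin t)
    have h3 := h1.sub h2
    have : (r (t + 2*π) - r t) * Real.sin t * Real.cos t + Dy t * (-Real.sin t) -
        ((r (t + 2*π) - r t) * Real.cos t * Real.sin t + Dx t * Real.cos t) = -g1 t := by
      simp only [hg1]; ring
    rwa [this] at h3
  -- w has period T
  have hwT : ∀ t, w (t + T) = w t := by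
    intro t
    simp only [hw, hDx, hDy]
    have e1 : t + T + 2*π = (t + 2*π) + T := by ring
    rw [hTn]
    rw [← hTn]
    rw [e1, hXT, hYT, hXT, hYT, hTn, Real.cos_add_int_mul_two_pi, Real.sin_add_int_mul_two_pi]
  -- the chord never vanishes
  have hchord : ∀ t, ¬ (Dx t = 0 ∧ Dy t = 0) := by
    intro t ⟨hx0, hy0⟩
    have hveq : v (ι t) = v (ι (t + 2*π)) := by
      have h1 : (v (ι (t + 2*π))).1 = (v (ι t)).1 := by
        have := sub_eq_zero.1 hx0
        exact this
      have h2 : (v (ι (t + 2*π))).2 = (v (ι t)).2 := by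
        have := sub_eq_zero.1 hy0
        exact this
      exact Prod.ext h1.symm h2.symm
    have hlt1 : 0 < ι (t + 2*π) - ι t := by
      have := hι_mono (show t < t + 2*π by linarith)
      linarith
    have hlt2 : ι (t + 2*π) - ι t < L := by
      have := hι_mono (show t + 2*π < t + T by linarith)
      rw [hι_shift] at this
      linarith
    exact hinj (ι t) (ι (t + 2*π)) hveq hlt1 hlt2
  -- at zeros of w, g1 does not vanish
  have hg1ne : ∀ t, w t = 0 → g1 t ≠ 0 := by
    intro t hw0 hg0
    apply hchord t
    have hpyth := Real.sin_sq_add_cos_sq t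
    constructor
    · have : Dx t = g1 t * Real.cos t - w t * Real.sin t := by
        simp only [hg1, hw]
        linear_combination (-(Dx t)) * hpyth
      rw [this, hw0, hg0]; ring
    · have : Dy t = g1 t * Real.sin t + w t * Real.cos t := by
        simp only [hg1, hw]
        linear_combination (-(Dy t)) * hpyth
      rw [this, hw0, hg0]; ring
  -- telescoping: w has a zero
  set N : ℕ := n.toNat with hN
  have hNn : (N:ℤ) = n := Int.toNat_of_nonneg (by linarith : (0:ℤ) ≤ n)
  have hN2 : 2 ≤ N := by omega
  have hNT : (N:ℝ) * (2*π) = T := by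
    rw [hTn]
    congr 1
    exact_mod_cast congrArg (Int.cast : ℤ → ℝ) hNn
  have hw_at : ∀ j : ℕ, w ((j:ℝ) * (2*π)) = Y (((j:ℕ) + 1 : ℝ) * (2*π)) - Y ((j:ℝ) * (2*π)) := by
    intro j
    simp only [hw, hDx, hDy]
    have hc : Real.cos ((j:ℝ) * (2*π)) = 1 := Real.cos_nat_mul_two_pi j
    have hs : Real.sin ((j:ℝ) * (2*π)) = 0 := by
      have := Real.sin_add_nat_mul_two_pi 0 j
      simpa using this
    rw [hc, hs]
    have : (j:ℝ) * (2*π) + 2*π = ((j:ℝ) + 1) * (2*π) := by ring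
    rw [this]
    ring
  have hsum : ∑ j ∈ Finset.range N, w ((j:ℝ) * (2*π)) = 0 := by
    have htel := Finset.sum_range_sub (fun i : ℕ => Y ((i:ℝ) * (2*π))) N
    have hcongr : ∀ j ∈ Finset.range N, w ((j:ℝ) * (2*π)) =
        (fun i : ℕ => Y ((i:ℝ) * (2*π))) (j+1) - (fun i : ℕ => Y ((i:ℝ) * (2*π))) j := by
      intro j _
      simp only
      rw [hw_at j]
      norm_num
    have e1 : ∑ j ∈ Finset.range N, w ((j:ℝ) * (2*π)) =
        ∑ j ∈ Finset.range N, ((fun i : ℕ => Y ((i:ℝ) * (2*π))) (j+1)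
          - (fun i : ℕ => Y ((i:ℝ) * (2*π))) j) := Finset.sum_congr rfl hcongr
    have e2 := e1.trans htel
    rw [e2, hNT]
    have h00 : ((0:ℕ):ℝ) * (2*π) = 0 := by norm_num
    rw [h00]
    have hT0 := hYT 0
    rw [zero_add] at hT0
    rw [hT0, sub_self]
  have hex_nonneg : ∃ j ∈ Finset.range N, 0 ≤ w ((j:ℝ) * (2*π)) := by
    by_contra hcon
    push_neg at hcon
    have : ∑ j ∈ Finset.range N, w ((j:ℝ) * (2*π)) < 0 :=
      Finset.sum_neg (fun j hj => hcon j hj) ⟨0, Finset.mem_range.2 (by omega)⟩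
    linarith [hsum, this]
  have hex_nonpos : ∃ j ∈ Finset.range N, w ((j:ℝ) * (2*π)) ≤ 0 := by
    by_contra hcon
    push_neg at hcon
    have : 0 < ∑ j ∈ Finset.range N, w ((j:ℝ) * (2*π)) :=
      Finset.sum_pos (fun j hj => hcon j hj) ⟨0, Finset.mem_range.2 (by omega)⟩
    linarith [hsum, this]
  obtain ⟨ja, _, hja⟩ := hex_nonneg
  obtain ⟨jb, _, hjb⟩ := hex_nonpos
  have hz : ∃ z, w z = 0 := by
    have h0 : (0:ℝ) ∈ Set.uIcc (w ((jb:ℝ) * (2*π))) (w ((ja:ℝ) * (2*π))) :=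
      Set.mem_uIcc.2 (Or.inl ⟨hjb, hja⟩)
    obtain ⟨z, _, hz⟩ := intermediate_value_uIcc hwc.continuousOn h0
    exact ⟨z, hz⟩
  obtain ⟨z, hz0⟩ := hz
  -- find a zero of w where g1 > 0
  have hmain : ∃ t₀, w t₀ = 0 ∧ 0 < g1 t₀ := by
    rcases lt_or_gt_of_ne (hg1ne z hz0) with hneg | hpos
    swap
    · exact ⟨z, hz0, hpos⟩
    · -- g1 z < 0 : w has positive derivative at z
      have hwz : HasDerivAt w (-g1 z) z := hwd z
      have hslope := hasDerivAt_iff_tendsto_slope.1 hwz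
      have hpos' : (0:ℝ) < -g1 z := by linarith
      have hev : ∀ᶠ u in 𝓝[≠] z, 0 < slope w z u :=
        hslope.eventually (eventually_gt_nhds hpos')
      -- a point on the right with w > 0
      have hr1 : ∀ᶠ u in 𝓝[>] z, 0 < slope w z u :=
        hev.filter_mono (nhdsWithin_mono z fun u hu => ne_of_gt hu)
      have hr2 : Ioo z (z+1) ∈ 𝓝[>] z :=
        Ioo_mem_nhdsGT_of_mem ⟨le_refl z, by linarith⟩
      obtain ⟨up, hups, hupI⟩ :=
        (hr1.and (eventually_of_mem hr2 fun u hu => hu)).exists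
      have hwup : 0 < w up := by
        have hd : slope w z up = (w up - w z) / (up - z) := slope_def_field w z up
        rw [hz0, sub_zero] at hd
        have hzu : 0 < up - z := by have := hupI.1; linarith
        have := hups
        rw [hd] at this
        have := (div_pos_iff.1 this)
        rcases this with ⟨h1, _⟩ | ⟨_, h2⟩
        · exact h1
        · linarith
      -- a point on the left with w < 0
      have hl1 : ∀ᶠ u in 𝓝[<] z, 0 < slope w z u :=
        hev.filter_mono (nhdsWithin_mono z fun u hu => ne_of_lt hu)
      have hl2 : Ioo (z-1) z ∈ 𝓝[<] z :=
        Ioo_mem_nhdsLT_of_mem ⟨by linarith, le_refl z⟩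
      obtain ⟨um, hums, humI⟩ :=
        (hl1.and (eventually_of_mem hl2 fun u hu => hu)).exists
      have hwum : w um < 0 := by
        have hd : slope w z um = (w um - w z) / (um - z) := slope_def_field w z um
        rw [hz0, sub_zero] at hd
        have hzu : um - z < 0 := by have := humI.2; linarith
        have := hums
        rw [hd] at this
        rcases div_pos_iff.1 this with ⟨h1, h2⟩ | ⟨h1, _⟩
        · linarith
        · exact h1
      -- down-crossing between up and um + T
      set bp : ℝ := um + T with hbp
      have hwbp : w bp < 0 := by rw [hbp, hwT]; exact hwum
      have hab : up < bp := by
        have h1 : up < z + 1 := hupI.2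
        have h2 : z - 1 < um := humI.1
        have : z + 1 < z - 1 + T := by linarith
        linarith
      set S : Set ℝ := Icc up bp ∩ {t | w t ≤ 0} with hS
      have hSclosed : IsClosed S := isClosed_Icc.inter (isClosed_le hwc continuous_const)
      have hSne : S.Nonempty := ⟨bp, ⟨hab.le, le_refl bp⟩, hwbp.le⟩
      have hSbdd : BddBelow S := ⟨up, fun t ht => ht.1.1⟩
      set t₀ : ℝ := sInf S with ht₀def
      have ht₀S : t₀ ∈ S := hSclosed.csInf_mem hSne hSbdd
      have hat₀ : up < t₀ := by
        rcases lt_or_eq_of_le ht₀S.1.1 with hlt | heq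
        · exact hlt
        · exfalso
          have : w t₀ ≤ 0 := ht₀S.2
          rw [← heq] at this
          linarith
      have hbefore : ∀ u, up ≤ u → u < t₀ → 0 < w u := by
        intro u hu1 hu2
        by_contra hcon
        push_neg at hcon
        have huS : u ∈ S := ⟨⟨hu1, le_trans hu2.le ht₀S.1.2⟩, hcon⟩
        have := csInf_le hSbdd huS
        linarith
      have hwt₀ : w t₀ = 0 := by
        have hwle : w t₀ ≤ 0 := ht₀S.2
        rcases lt_or_eq_of_le hwle with hlt | heq
        · exfalso
          have hev0 : ∀ᶠ u in 𝓝 t₀, w u < 0 :=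
            hwc.continuousAt.eventually_lt_const hlt
          have hev1 : ∀ᶠ u in 𝓝[<] t₀, w u < 0 :=
            eventually_nhdsWithin_of_eventually_nhds hev0
          have hev2 : Ioo up t₀ ∈ 𝓝[<] t₀ :=
            Ioo_mem_nhdsLT_of_mem ⟨hat₀, le_refl t₀⟩
          obtain ⟨u, hu1, hu2⟩ :=
            (hev1.and (eventually_of_mem hev2 fun x hx => hx)).exists
          exact absurd hu1 (not_lt.2 (hbefore u hu2.1.le hu2.2).le)
        · exact heq
      refine ⟨t₀, hwt₀, ?_⟩
      have hg1ge : 0 ≤ g1 t₀ := by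
        have hslope₀ := hasDerivAt_iff_tendsto_slope.1 (hwd t₀)
        have htend : Tendsto (slope w t₀) (𝓝[<] t₀) (𝓝 (-g1 t₀)) :=
          hslope₀.mono_left (nhdsWithin_mono t₀ fun u hu => ne_of_lt hu)
        have hev2 : Ioo up t₀ ∈ 𝓝[<] t₀ :=
          Ioo_mem_nhdsLT_of_mem ⟨hat₀, le_refl t₀⟩
        have hevle : ∀ᶠ u in 𝓝[<] t₀, slope w t₀ u ≤ 0 := by
          filter_upwards [eventually_of_mem hev2 fun x hx => hx,
            eventually_mem_nhdsWithin] with u huI huIio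
          have hwu : 0 < w u := hbefore u huI.1.le huI.2
          have hd : slope w t₀ u = (w u - w t₀) / (u - t₀) := slope_def_field w t₀ u
          rw [hwt₀, sub_zero] at hd
          rw [hd]
          apply le_of_lt
          apply div_neg_of_pos_of_neg hwu
          have : u < t₀ := huIio
          linarith
        have := le_of_tendsto htend hevle
        linarith
      rcases lt_or_eq_of_le hg1ge with h | h
      · exact h
      · exact absurd h.symm (hg1ne t₀ hwt₀)
  obtain ⟨t₀, hwt₀, hg1t₀⟩ := hmain
  -- points on the curve at the special angles
  set σ0 : ℝ := ι t₀ with hσ0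
  set σh : ℝ := ι (t₀ + π/2) with hσh
  set σp : ℝ := ι (t₀ + π) with hσp
  set σd : ℝ := ι (t₀ + (π + π/2)) with hσd
  set σ2 : ℝ := ι (t₀ + 2*π) with hσ2
  have ho1 : σ0 < σh := hι_mono (by linarith)
  have ho2 : σh < σp := hι_mono (by linarith)
  have ho3 : σp < σd := hι_mono (by linarith)
  have ho4 : σd < σ2 := hι_mono (by linarith)
  have hσ2L : σ2 < σ0 + L := by
    have h5 := hι_mono (show t₀ + 2*π < t₀ + T by linarith)
    rw [hι_shift] at h5
    exact h5
  have hθσ0 : θ σ0 = t₀ := hθι _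
  have hθσh : θ σh = t₀ + π/2 := hθι _
  have hθσp : θ σp = t₀ + π := hθι _
  have hθσd : θ σd = t₀ + (π + π/2) := hθι _
  have hθσ2 : θ σ2 = t₀ + 2*π := hθι _
  -- coordinates adapted to the tangent direction at σ0
  set η : ℝ → ℝ := fun s =>
    ((v s).2 - (v σ0).2) * Real.cos t₀ - ((v s).1 - (v σ0).1) * Real.sin t₀ with hηdef
  set ξ : ℝ → ℝ := fun s =>
    ((v s).1 - (v σ0).1) * Real.cos t₀ + ((v s).2 - (v σ0).2) * Real.sin t₀ with hξdef
  have hv1c : Continuous fun s => (v s).1 := continuous_fst.comp hv_cont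
  have hv2c : Continuous fun s => (v s).2 := continuous_snd.comp hv_cont
  have hηc : Continuous η :=
    (((hv2c.sub continuous_const).mul continuous_const).sub
      ((hv1c.sub continuous_const).mul continuous_const))
  have hξc : Continuous ξ :=
    (((hv1c.sub continuous_const).mul continuous_const).add
      ((hv2c.sub continuous_const).mul continuous_const))
  have hv1d : ∀ s, HasDerivAt (fun u => (v u).1) (Real.cos (θ s)) s := fun s =>
    hasDerivAt_fst (hvd s)
  have hv2d : ∀ s, HasDerivAt (fun u => (v u).2) (Real.sin (θ s)) s := fun s =>
    hasDerivAt_snd (hvd s)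
  have hηd : ∀ s, HasDerivAt η (Real.sin (θ s - t₀)) s := by
    intro s
    have h1 := (((hv2d s).sub_const (v σ0).2).mul_const (Real.cos t₀)).sub
      (((hv1d s).sub_const (v σ0).1).mul_const (Real.sin t₀))
    rw [Real.sin_sub]
    exact h1
  have hξd : ∀ s, HasDerivAt ξ (Real.cos (θ s - t₀)) s := by
    intro s
    have h1 := (((hv1d s).sub_const (v σ0).1).mul_const (Real.cos t₀)).add
      (((hv2d s).sub_const (v σ0).2).mul_const (Real.sin t₀))
    rw [Real.cos_sub]
    exact h1
  have hmonoη : StrictMonoOn η (Icc σ0 σp) := by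
    apply strictMonoOn_of_deriv_pos (convex_Icc _ _) hηc.continuousOn
    intro s hs
    rw [interior_Icc] at hs
    rw [(hηd s).deriv]
    have h1 : t₀ < θ s := by rw [← hθσ0]; exact hmono hs.1
    have h2 : θ s < t₀ + π := by rw [← hθσp]; exact hmono hs.2
    exact Real.sin_pos_of_pos_of_lt_pi (by linarith) (by linarith)
  have hantiη : StrictAntiOn η (Icc σp σ2) := by
    apply strictAntiOn_of_deriv_neg (convex_Icc _ _) hηc.continuousOn
    intro s hs
    rw [interior_Icc] at hs
    rw [(hηd s).deriv]
    have h1 : t₀ + π < θ s := by rw [← hθσp]; exact hmono hs.1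
    have h2 : θ s < t₀ + 2*π := by rw [← hθσ2]; exact hmono hs.2
    have hrw : θ s - t₀ = (θ s - t₀ - 2*π) + 2*π := by ring
    rw [hrw, Real.sin_add_two_pi]
    exact Real.sin_neg_of_neg_of_neg_pi_lt (by linarith) (by linarith)
  have hantiξ : StrictAntiOn ξ (Icc σh σd) := by
    apply strictAntiOn_of_deriv_neg (convex_Icc _ _) hξc.continuousOn
    intro s hs
    rw [interior_Icc] at hs
    rw [(hξd s).deriv]
    have h1 : t₀ + π/2 < θ s := by rw [← hθσh]; exact hmono hs.1
    have h2 : θ s < t₀ + (π + π/2) := by rw [← hθσd]; exact hmono hs.2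
    exact Real.cos_neg_of_pi_div_two_lt_of_lt (by linarith) (by linarith)
  have hη0 : η σ0 = 0 := by simp [hηdef]
  have hξ0 : ξ σ0 = 0 := by simp [hξdef]
  have hDxσ : Dx t₀ = (v σ2).1 - (v σ0).1 := rfl
  have hDyσ : Dy t₀ = (v σ2).2 - (v σ0).2 := rfl
  have hησ2 : η σ2 = 0 := by
    have e : η σ2 = Dy t₀ * Real.cos t₀ - Dx t₀ * Real.sin t₀ := by
      rw [hDxσ, hDyσ]
    rw [e]
    have hh := hwt₀
    simp only [hw] at hh
    exact hh
  have hξσ2 : 0 < ξ σ2 := by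
    have e : ξ σ2 = Dx t₀ * Real.cos t₀ + Dy t₀ * Real.sin t₀ := by
      rw [hDxσ, hDyσ]
    rw [e]
    have hh := hg1t₀
    simp only [hg1] at hh
    exact hh
  obtain ⟨a, b, hab0, habab, hab2, hηab, hξab⟩ :=
    crossing hηc hξc ho1 ho2 ho3 ho4 hmonoη hantiη hantiξ hη0 hησ2 hξ0 hξσ2
  have hpyth := Real.sin_sq_add_cos_sq t₀
  have hident1 : ∀ s, (v s).1 - (v σ0).1 = ξ s * Real.cos t₀ - η s * Real.sin t₀ := by
    intro s
    simp only [hξdef, hηdef]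
    linear_combination (-((v s).1 - (v σ0).1)) * hpyth
  have hident2 : ∀ s, (v s).2 - (v σ0).2 = ξ s * Real.sin t₀ + η s * Real.cos t₀ := by
    intro s
    simp only [hξdef, hηdef]
    linear_combination (-((v s).2 - (v σ0).2)) * hpyth
  have hvab : v a = v b := by
    have e1 : (v a).1 = (v b).1 := by
      have ha := hident1 a
      have hb := hident1 b
      rw [hηab, hξab] at ha
      linarith
    have e2 : (v a).2 = (v b).2 := by
      have ha := hident2 a
      have hb := hident2 b
      rw [hηab, hξab] at ha
      linarith
    exact Prod.ext e1 e2
  exact hinj a b hvab (by linarith) (by linarith)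


end TMLB

set_option maxHeartbeats 1600000 in
/-- For a strictly convex simple closed `C²` arc-length curve (curvature `≥ c_k > 0`),
the tangent map `v'` is invertible on a period with Lipschitz inverse:
`|v'(s) − v'(s')| ≥ c · min(|s−s'| mod L, L − (|s−s'| mod L))`. -/
theorem tangent_map_lower_bound (L : ℝ) (hL : 0 < L) (v : ℝ → ℝ × ℝ)
    (hper : ∀ s, v (s + L) = v s) (hreg : ContDiff ℝ 2 v)
    (hunit : ∀ s, dot (deriv v s) (deriv v s) = 1)
    (hsimple : Set.InjOn v (Set.Ico 0 L))
    (ck : ℝ) (hck : 0 < ck) (hcurv : ∀ s, ck ≤ curv v s) :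
    ∃ c : ℝ, 0 < c ∧ ∀ s s' : ℝ,
      ∀ m : ℝ, m = |s - s'| - L * (⌊|s - s'| / L⌋ : ℤ) →
        c * min m (L - m) ≤ enorm2 (deriv v s - deriv v s') := by
  open Real Set in
  obtain ⟨θ, hθd, hVθ⟩ := TMLB.exists_theta v hreg hunit
  have hπ := Real.pi_pos
  have hk_pos : ∀ s, 0 < curv v s := fun s => lt_of_lt_of_le hck (hcurv s)
  -- differentiability of v
  have h2 : ContDiff ℝ (1 + 1) v := by norm_num at hreg ⊢; exact hreg
  rw [contDiff_succ_iff_deriv] at h2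
  have hv_diff : Differentiable ℝ v := h2.1
  have hvd : ∀ s, HasDerivAt v (Real.cos (θ s), Real.sin (θ s)) s := fun s =>
    hVθ s ▸ (hv_diff s).hasDerivAt
  -- periodicity of the tangent and of the curvature
  have hVper : ∀ s, deriv v (s + L) = deriv v s := by
    intro s
    have hfun : (fun x => v (x + L)) = v := funext hper
    have h3 := deriv_comp_add_const v L s
    rw [hfun] at h3
    exact h3.symm
  have hAper : ∀ s, deriv (deriv v) (s + L) = deriv (deriv v) s := by
    intro s
    have hfun : (fun x => deriv v (x + L)) = deriv v := funext hVper
    have h3 := deriv_comp_add_const (deriv v) L s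
    rw [hfun] at h3
    exact h3.symm
  have hkper : ∀ s, curv v (s + L) = curv v s := by
    intro s
    simp only [curv, dot, perp, hVper, hAper]
  -- growth of θ
  have hθlb : ∀ p q : ℝ, p ≤ q → ck * (q - p) ≤ θ q - θ p := by
    intro p q hpq
    have hmono2 : Monotone (fun u => θ u - ck * u) := by
      apply monotone_of_deriv_nonneg
      · intro u
        exact ((hθd u).sub ((hasDerivAt_id u).const_mul ck)).differentiableAt
      · intro u
        have hder : HasDerivAt (fun u => θ u - ck * u) (curv v u - ck) u := by
          have h5 := (hθd u).sub ((hasDerivAt_id u).const_mul ck)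
          simpa [Pi.sub_def] using h5
        rw [hder.deriv]
        have := hcurv u
        linarith
    have h6 := hmono2 hpq
    simp only at h6
    linarith
  -- the total turning T
  set T : ℝ := θ L - θ 0 with hT
  have hθshift : ∀ s, θ (s + L) = θ s + T := by
    intro s
    have hgd : ∀ u, HasDerivAt (fun x => θ (x + L) - θ x) (0:ℝ) u := by
      intro u
      have h1 : HasDerivAt (fun x => θ (x + L)) (curv v (u + L)) u :=
        HasDerivAt.comp_add_const u L (hθd (u + L))
      have h2' := h1.sub (hθd u)
      rw [hkper u] at h2'
      simpa [Pi.sub_def] using h2'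
    have h7 := is_const_of_deriv_eq_zero (fun u => (hgd u).differentiableAt)
      (fun u => (hgd u).deriv) s 0
    simp only [zero_add] at h7
    rw [hT]
    linarith [h7]
  have hT_pos : 0 < T := by
    have := hθlb 0 L hL.le
    rw [hT]
    nlinarith
  -- T is an integer multiple of 2π
  have hVL : deriv v (0 + L) = deriv v 0 := hVper 0
  rw [zero_add, hVθ L, hVθ 0] at hVL
  have hcosL : Real.cos (θ L) = Real.cos (θ 0) := congrArg Prod.fst hVL
  have hsinL : Real.sin (θ L) = Real.sin (θ 0) := congrArg Prod.snd hVL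
  have hexp : Complex.exp ((θ L : ℂ) * Complex.I) = Complex.exp ((θ 0 : ℂ) * Complex.I) := by
    rw [Complex.exp_mul_I, Complex.exp_mul_I]
    rw [← Complex.ofReal_cos, ← Complex.ofReal_cos, ← Complex.ofReal_sin, ← Complex.ofReal_sin]
    rw [hcosL, hsinL]
  obtain ⟨n, hn⟩ := Complex.exp_eq_exp_iff_exists_int.1 hexp
  have hTn : T = n * (2 * Real.pi) := by
    have h1 : ((θ L - θ 0 - n * (2*Real.pi) : ℝ) : ℂ) * Complex.I = 0 := by
      push_cast
      linear_combination hn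
    have h2' : ((θ L - θ 0 - n * (2*Real.pi) : ℝ) : ℂ) = 0 := by
      rcases mul_eq_zero.1 h1 with h | h
      · exact h
      · exact absurd h Complex.I_ne_zero
    have h3 : θ L - θ 0 - n * (2*Real.pi) = 0 := by exact_mod_cast h2'
    rw [hT]; linarith
  have hn_pos : 0 < n := by
    by_contra hcon
    push_neg at hcon
    have h1 : (n:ℝ) ≤ 0 := by exact_mod_cast hcon
    nlinarith [hTn, hT_pos]
  -- injectivity on every window of length L
  have hinj' : ∀ x y : ℝ, v x = v y → 0 < y - x → y - x < L → False := by
    intro x y hv hd1 hd2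
    have hvper : Function.Periodic v L := hper
    have hvint : ∀ (x : ℝ) (jj : ℤ), v (x + jj*L) = v x := fun x jj => (hvper.int_mul jj) x
    set q : ℤ := ⌊x / L⌋ with hq
    set x' : ℝ := x - q * L with hx'
    have hx0 : 0 ≤ x' := by
      have h1 : (q:ℝ) * L ≤ x := by
        rw [hq]
        calc ((⌊x/L⌋ : ℤ):ℝ) * L ≤ (x/L) * L :=
              mul_le_mul_of_nonneg_right (Int.floor_le _) hL.le
          _ = x := by field_simp
      rw [hx']
      linarith
    have hxL : x' < L := by
      have h1 : x / L < (⌊x/L⌋ : ℤ) + 1 := Int.lt_floor_add_one _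
      have h2' : x < ((q:ℝ) + 1) * L := by
        rw [hq]
        have h3 := mul_lt_mul_of_pos_right h1 hL
        rw [div_mul_cancel₀ _ (ne_of_gt hL)] at h3
        push_cast at h3 ⊢
        linarith
      rw [hx']
      nlinarith
    have hvx' : v x' = v x := by
      have h1 := hvint x (-q)
      push_cast at h1
      rw [show x + -(q:ℝ)*L = x - (q:ℝ)*L by ring] at h1
      rw [hx']
      exact h1
    set dd : ℝ := y - x with hdd
    have hvy' : v (x' + dd) = v x' := by
      have h1 : x' + dd = y + (-q:ℤ)*L := by rw [hx', hdd]; push_cast; ring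
      have h2' := hvint y (-q)
      rw [h1, h2', ← hv, hvx']
    rcases lt_or_ge (x' + dd) L with hcase | hcase
    · have h8 := hsimple (Set.mem_Ico.2 ⟨by linarith, hcase⟩)
        (Set.mem_Ico.2 ⟨hx0, hxL⟩) hvy'
      linarith
    · set y'' : ℝ := x' + dd - L with hy''
      have hvy'' : v y'' = v x' := by
        have h1 : y'' = (x' + dd) + (-1:ℤ)*L := by rw [hy'']; push_cast; ring
        have h2' := hvint (x' + dd) (-1)
        rw [h1, h2', hvy']
      have hy0 : 0 ≤ y'' := by rw [hy'']; linarith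
      have hyL : y'' < L := by rw [hy'']; linarith
      have h8 := hsimple (Set.mem_Ico.2 ⟨hy0, hyL⟩) (Set.mem_Ico.2 ⟨hx0, hxL⟩) hvy''
      rw [hy''] at h8
      linarith
  -- Umlaufsatz : n = 1
  have hn1 : n = 1 := by
    by_contra hcon
    have hn2 : 2 ≤ n := by omega
    exact TMLB.umlauf L hL v hreg.continuous hper hinj' θ (curv v) hk_pos hθd hvd
      T hθshift n hTn hn2
  have hT2π : T = 2 * Real.pi := by rw [hTn, hn1]; push_cast; ring
  have hθshift2 : ∀ s, θ (s + L) = θ s + 2*Real.pi := by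
    intro s; rw [hθshift s, hT2π]
  have hθint2 : ∀ (s : ℝ) (jj : ℤ), θ (s + jj * L) = θ s + jj * (2*Real.pi) := by
    intro s jj
    have hρ : Function.Periodic (fun u => θ u - (2*Real.pi / L) * u) L := by
      intro u
      simp only
      rw [hθshift2]
      field_simp
      ring
    have h2' := (hρ.int_mul jj) s
    have h3 : 2*Real.pi / L * ((jj:ℝ) * L) = (jj:ℝ) * (2*Real.pi) := by
      field_simp
    nlinarith [h2', h3]
  -- the final estimate
  refine ⟨2*ck/Real.pi, by positivity, ?_⟩
  intro s s' m hm
  set d : ℝ := |s - s'| with hd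
  set j : ℤ := ⌊d / L⌋ with hj
  have hm' : m = d - L * (j:ℝ) := hm
  have hd0 : 0 ≤ d := abs_nonneg _
  have hjd : (j:ℝ) * L ≤ d := by
    calc (j:ℝ) * L ≤ (d/L) * L := mul_le_mul_of_nonneg_right (Int.floor_le _) hL.le
      _ = d := by field_simp
  have hdj1 : d < ((j:ℝ)+1) * L := by
    have h1 : d / L < (j:ℝ) + 1 := by exact_mod_cast Int.lt_floor_add_one (d/L)
    calc d = (d/L)*L := by field_simp
      _ < ((j:ℝ)+1)*L := mul_lt_mul_of_pos_right h1 hL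
  have hm0 : 0 ≤ m := by rw [hm']; linarith
  have hmL : m < L := by rw [hm']; nlinarith
  set a : ℝ := min s s' with ha
  have hkey : enorm2 (deriv v s - deriv v s') = enorm2 (deriv v (a + d) - deriv v a) := by
    rcases le_total s' s with h | h
    · rw [ha, hd, min_eq_right h, abs_of_nonneg (by linarith : (0:ℝ) ≤ s - s'),
        show s' + (s - s') = s by ring]
    · rw [ha, hd, min_eq_left h, abs_of_nonpos (by linarith : s - s' ≤ 0),
        show s + -(s - s') = s' by ring]
      exact TMLB.enorm2_sub_comm _ _
  set δ : ℝ := θ (a + m) - θ a with hδ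
  have hδlb : ck * m ≤ δ := by
    have h1 := hθlb a (a+m) (by linarith)
    rw [hδ]
    have h2' : a + m - a = m := by ring
    rw [h2'] at h1
    exact h1
  have hδub : δ ≤ 2*Real.pi - ck * (L - m) := by
    have h1 := hθlb (a+m) (a+L) (by linarith)
    have h2' : θ (a + L) = θ a + 2*Real.pi := hθshift2 a
    have h3 : a + L - (a + m) = L - m := by ring
    rw [h3] at h1
    rw [hδ]
    linarith
  have hδ0 : 0 ≤ δ := le_trans (by nlinarith) hδlb
  have hδ2 : δ ≤ 2*Real.pi := by nlinarith
  have hθad : θ (a + d) - θ a = δ + (j:ℝ) * (2*Real.pi) := by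
    have hsplit : a + d = (a + m) + (j:ℝ) * L := by rw [hm']; ring
    have h1 := hθint2 (a + m) j
    rw [hsplit, h1, hδ]
    ring
  have hcosval : Real.cos (θ (a+d) - θ a) = Real.cos δ := by
    rw [hθad, Real.cos_add_int_mul_two_pi]
  have hnorm_sq : (deriv v (a+d) - deriv v a).1^2 + (deriv v (a+d) - deriv v a).2^2
      = 2 - 2*Real.cos δ := by
    rw [hVθ (a+d), hVθ a]
    simp only [Prod.fst_sub, Prod.snd_sub]
    linear_combination (Real.sin_sq_add_cos_sq (θ a)) + (Real.sin_sq_add_cos_sq (θ (a+d)))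
      + 2*(Real.cos_sub (θ (a+d)) (θ a)) - 2*hcosval
  have hsin_nonneg : 0 ≤ Real.sin (δ/2) :=
    Real.sin_nonneg_of_mem_Icc ⟨by linarith, by linarith⟩
  have hnorm : enorm2 (deriv v (a+d) - deriv v a) = 2 * Real.sin (δ/2) := by
    rw [enorm2, hnorm_sq]
    have h4 : 2 - 2*Real.cos δ = (2*Real.sin (δ/2))^2 := by
      have h5 := Real.sin_sq_eq_half_sub (δ/2)
      rw [show 2*(δ/2) = δ by ring] at h5
      nlinarith [h5]
    rw [h4, Real.sqrt_sq (by linarith)]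
  rw [hkey, hnorm]
  have hmin1 : ck/2 * min m (L - m) ≤ min (δ/2) (Real.pi - δ/2) := by
    apply le_min
    · have h1 : min m (L-m) ≤ m := min_le_left _ _
      nlinarith
    · have h1 : min m (L-m) ≤ L - m := min_le_right _ _
      nlinarith
  have hJ := TMLB.jordan_sin (x := δ/2) (by linarith) (by linarith)
  have h2π : (0:ℝ) < 2/Real.pi := by positivity
  have h6 := mul_le_mul_of_nonneg_left hmin1 h2π.le
  have hfin : 2/Real.pi * (ck/2 * min m (L-m)) ≤ Real.sin (δ/2) := le_trans h6 hJ
  have he : 2*ck/Real.pi * min m (L-m) = 2 * (2/Real.pi * (ck/2 * min m (L-m))) := by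
    ring
  rw [he]
  linarith [hfin]
end
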